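/- arXiv:math/0501313 — 6 statements merged into one kernel-verified Lean document; each statement's English description precedes it below -/
import Mathlib

section
/- For any real θ and any μ with 0 < μ < 1/4, one has ((1/2) + (1/2)cos θ)^(1/2) ≤ ((1-μ) + μ cos θ)^(1/(4μ)). -/
theorem sqrt_half_cos_le_rpow (θ μ : ℝ) (hμ0 : 0 < μ) (hμ : μ < 1 / 4) :
    (1 / 2 + (1 / 2) * Real.cos θ) ^ ((1 : ℝ) / 2) ≤
      ((1 - μ) + μ * Real.cos θ) ^ ((1 : ℝ) / (4 * μ)) := by
  have hc1 : -1 ≤ Real.cos θ := Real.neg_one_le_cos θ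
  have hs : (-1 : ℝ) ≤ (Real.cos θ - 1) / 2 := by linarith
  have h1 : (1 + (Real.cos θ - 1) / 2) ^ (2 * μ) ≤ 1 + (2 * μ) * ((Real.cos θ - 1) / 2) :=
    rpow_one_add_le_one_add_mul_self hs (by linarith) (by linarith)
  have hx0 : (0 : ℝ) ≤ 1 / 2 + (1 / 2) * Real.cos θ := by linarith
  have heq : (1 : ℝ) + (Real.cos θ - 1) / 2 = 1 / 2 + (1 / 2) * Real.cos θ := by ring
  have heq2 : (1 : ℝ) + (2 * μ) * ((Real.cos θ - 1) / 2) = (1 - μ) + μ * Real.cos θ := by ring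
  rw [heq, heq2] at h1
  have key : ((1 / 2 + (1 / 2) * Real.cos θ) ^ ((2 : ℝ) * μ)) ^ ((1 : ℝ) / (4 * μ)) ≤
      ((1 - μ) + μ * Real.cos θ) ^ ((1 : ℝ) / (4 * μ)) :=
    Real.rpow_le_rpow (Real.rpow_nonneg hx0 _) h1 (by positivity)
  rw [← Real.rpow_mul hx0] at key
  convert key using 2
  field_simp
  ring
end

section
/- (Weighted Odlyzko lemma) Let 0 ≤ d ≤ n, let F be a field, and let Y = (η₁,…,ηₙ) where η₁,…,ηₙ are i.i.d. random variables taking values in {-1,0,1} ⊂ F with P(ηᵢ = 0) = 1-μ and P(ηᵢ = 1) = P(ηᵢ = -1) = μ/2, where 0 ≤ μ ≤ 1/2. Then for any d-dimensional linear subspace W of Fⁿ, P(Y ∈ W) ≤ (1-μ)^(n-d). -/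
/-- The value in `{-1,0,1} ⊂ F` encoded by an element of `Fin 3`. -/
def triVal (F : Type*) [Field F] : Fin 3 → F := ![-1, 0, 1]

/-- The probability weight of an element of `Fin 3` under the lazy sign distribution:
`0` has probability `1-μ` and `±1` have probability `μ/2` each. -/
noncomputable def triWeight (μ : ℝ) : Fin 3 → ℝ := ![μ / 2, 1 - μ, μ / 2]

lemma triWeight_nonneg {μ : ℝ} (hμ0 : 0 ≤ μ) (hμ : μ ≤ 1 / 2) (a : Fin 3) :
    0 ≤ triWeight μ a := by
  fin_cases a <;> simp [triWeight] <;> linarith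

lemma sum_triWeight (μ : ℝ) : ∑ a : Fin 3, triWeight μ a = 1 := by
  simp [triWeight, Fin.sum_univ_three]; ring

lemma fiber_bound {F : Type*} [Field F] {μ : ℝ} (hμ0 : 0 ≤ μ) (hμ : μ ≤ 1 / 2) (c : F)
    [DecidableEq F] :
    ∑ a : Fin 3, (if triVal F a = c then triWeight μ a else 0) ≤ 1 - μ := by
  have h2 : (-1 : F) ≠ 0 := neg_ne_zero.mpr one_ne_zero
  have h1 : (1 : F) ≠ 0 := one_ne_zero
  rw [Fin.sum_univ_three]
  simp only [triVal, triWeight, Matrix.cons_val_zero, Matrix.cons_val_one, Matrix.head_cons,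
    Matrix.cons_val_two, Matrix.tail_cons]
  show (if (-1 : F) = c then μ / 2 else 0) + (if (0 : F) = c then 1 - μ else 0) +
    (if (1 : F) = c then μ / 2 else 0) ≤ 1 - μ
  split_ifs with ha hb hc <;>
    first
      | linarith
      | (exfalso; first
          | exact h2 (by assumption_mod_cast ▸ (by omega))
          | simp_all)

open Finset in
lemma exists_good_coords (F : Type*) [Field F] (n d : ℕ) (W : Submodule F (Fin n → F))
    (hW : Module.finrank F W = d) :
    ∃ S : Finset (Fin n), S.card = d ∧ ∀ w ∈ W, (∀ i ∈ S, w i = 0) → w = 0 := by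
  classical
  have hdn : d ≤ n := by
    rw [← hW]
    simpa using Submodule.finrank_le W
  obtain ⟨s, hsW, hspan, hli⟩ := exists_linearIndependent F (W : Set (Fin n → F))
  rw [Submodule.span_eq] at hspan
  replace hli : LinearIndepOn F id s := hli
  set e : Fin n → (Fin n → F) := fun i => fun j => if i = j then 1 else 0 with he
  have heinj : Function.Injective e := by
    intro i j hij
    by_contra hne
    have := congrFun hij j
    simp [he, hne] at this
  have hst : s ⊆ s ∪ Set.range e := Set.subset_union_left
  have hbsub : hli.extend hst ⊆ s ∪ Set.range e := hli.extend_subset hst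
  have hsb : s ⊆ hli.extend hst := hli.subset_extend hst
  have hbli : LinearIndependent F ((↑) : hli.extend hst → (Fin n → F)) :=
    hli.linearIndepOn_extend hst
  set b := hli.extend hst with hb
  have hespan : Submodule.span F (Set.range e) = ⊤ := by
    rw [eq_top_iff]
    intro x _
    rw [pi_eq_sum_univ x]
    exact Submodule.sum_mem _ fun i _ =>
      Submodule.smul_mem _ _ (Submodule.subset_span ⟨i, rfl⟩)
  have hbspan : Submodule.span F b = ⊤ := by
    rw [hli.span_extend_eq_span hst, eq_top_iff, ← hespan]
    exact Submodule.span_mono Set.subset_union_right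
  have hbfin : b.Finite := hbli.setFinite
  have hsfin : s.Finite := hbfin.subset hsb
  -- cardinalities
  have hbn : b.ncard = n := by
    haveI : Fintype b := hbfin.fintype
    have hbasis : Module.Basis b F (Fin n → F) :=
      Module.Basis.mk hbli (by rw [Subtype.range_coe]; exact hbspan.ge)
    have := Module.finrank_eq_card_basis hbasis
    simp only [Module.finrank_fintype_fun_eq_card, Fintype.card_fin] at this
    rw [Set.ncard_eq_toFinset_card' , Set.toFinset_card, ← this]
  have hsd : s.ncard = d := by
    haveI : Fintype s := hsfin.fintype
    have h1 := finrank_span_set_eq_card hli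
    rw [hspan, hW] at h1
    rw [Set.ncard_eq_toFinset_card', h1]
  set T : Finset (Fin n) := Finset.univ.filter (fun i => e i ∈ b \ s) with hT
  have hTimage : (↑T : Set (Fin n)).image e = b \ s := by
    ext x
    simp only [Set.mem_image, Finset.mem_coe, hT, Finset.mem_filter, Finset.mem_univ, true_and]
    constructor
    · rintro ⟨i, hi, rfl⟩; exact hi
    · intro hx
      rcases hbsub hx.1 with h | ⟨i, rfl⟩
      · exact absurd h hx.2
      · exact ⟨i, hx, rfl⟩
  have hTcard : T.card = n - d := by
    have h1 : (b \ s).ncard = n - d := by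
      rw [Set.ncard_diff hsb hsfin, hbn, hsd]
    rw [← h1, ← hTimage, Set.ncard_image_of_injective _ heinj]
    simp [Set.ncard_coe_finset]
  refine ⟨Tᶜ, ?_, ?_⟩
  · rw [Finset.card_compl, hTcard, Fintype.card_fin]
    omega
  · intro w hwW hw0
    have hw1 : w ∈ Submodule.span F s := hspan ▸ hwW
    have hw2 : w ∈ Submodule.span F (b \ s : Set (Fin n → F)) := by
      rw [← hTimage]
      rw [pi_eq_sum_univ w]
      refine Submodule.sum_mem _ fun i _ => ?_
      by_cases hi : i ∈ T
      · exact Submodule.smul_mem _ _ (Submodule.subset_span ⟨i, hi, rfl⟩)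
      · have : w i = 0 := hw0 i (Finset.mem_compl.mpr hi)
        rw [this, zero_smul]
        exact Submodule.zero_mem _
    have hdisj : Disjoint (Submodule.span F s) (Submodule.span F (b \ s : Set (Fin n → F))) := by
      have := hbli.disjoint_span_image (s := (↑) ⁻¹' s) (t := (↑) ⁻¹' (b \ s))
        (Set.disjoint_sdiff_right.preimage _)
      rwa [Subtype.image_preimage_coe, Subtype.image_preimage_coe,
        Set.inter_eq_right.mpr hsb, Set.inter_eq_right.mpr Set.diff_subset] at this
    exact Submodule.disjoint_def.mp hdisj w hw1 hw2

open scoped Classical in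
/-- Weighted Odlyzko lemma: if `Y = (η₁,…,ηₙ)` with `ηᵢ` i.i.d. taking value `0` with
probability `1-μ` and `±1` with probability `μ/2` each, and `W` is a `d`-dimensional
subspace of `Fⁿ`, then `P(Y ∈ W) ≤ (1-μ)^(n-d)`. -/
theorem weighted_odlyzko (F : Type*) [Field F] (n d : ℕ) (hdn : d ≤ n)
    (μ : ℝ) (hμ0 : 0 ≤ μ) (hμ : μ ≤ 1 / 2)
    (W : Submodule F (Fin n → F)) (hW : Module.finrank F W = d) :
    ∑ s : Fin n → Fin 3,
        (if (fun i => triVal F (s i)) ∈ W then ∏ i, triWeight μ (s i) else 0) ≤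
      (1 - μ) ^ (n - d) := by
  classical
  obtain ⟨p, hpcard, hS⟩ : ∃ p : Fin n → Prop, Fintype.card {x // p x} = d ∧
      ∀ w ∈ W, (∀ i, p i → w i = 0) → w = 0 := by
    obtain ⟨S, hScard, hS⟩ := exists_good_coords F n d W hW
    refine ⟨fun i => i ∈ S, ?_, fun w hw h0 => hS w hw fun i hi => h0 i hi⟩
    have h := (Fintype.card_of_subtype S (fun _ => Iff.rfl : ∀ x, x ∈ S ↔ (fun i => i ∈ S) x)).trans hScard
    convert h using 2
  have h1μ : (0:ℝ) ≤ 1 - μ := by linarith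
  have hcard : Fintype.card {x // ¬ p x} = n - d := by
    rw [Fintype.card_subtype_compl, hpcard, Fintype.card_fin]
  set E := (Equiv.piEquivPiSubtypeProd p (fun _ => Fin 3)).symm with hE
  have hEab : ∀ (x : ({x // p x} → Fin 3) × ({x // ¬ p x} → Fin 3)) (i : Fin n),
      E x i = if h : p i then x.1 ⟨i, h⟩ else x.2 ⟨i, h⟩ := fun x i => by
    rw [hE, Equiv.piEquivPiSubtypeProd_symm_apply]
  have hEa : ∀ (a : {x // p x} → Fin 3) (b : {x // ¬ p x} → Fin 3) (j : {x // p x}),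
      E (a, b) j.1 = a j := fun a b j => by rw [hEab, dif_pos j.2]
  have hEb : ∀ (a : {x // p x} → Fin 3) (b : {x // ¬ p x} → Fin 3) (j : {x // ¬ p x}),
      E (a, b) j.1 = b j := fun a b j => by rw [hEab, dif_neg j.2]
  set Pa : ({x // p x} → Fin 3) → ℝ := fun a => ∏ j, triWeight μ (a j) with hPa
  set Pb : ({x // ¬ p x} → Fin 3) → ℝ := fun b => ∏ j, triWeight μ (b j) with hPb
  have hPa0 : ∀ a, 0 ≤ Pa a := fun a => Finset.prod_nonneg fun j _ => triWeight_nonneg hμ0 hμ _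
  have hPb0 : ∀ b, 0 ≤ Pb b := fun b => Finset.prod_nonneg fun j _ => triWeight_nonneg hμ0 hμ _
  have hprod : ∀ a b, ∏ i, triWeight μ (E (a, b) i) = Pa a * Pb b := by
    intro a b
    rw [← Fintype.prod_subtype_mul_prod_subtype p (fun i => triWeight μ (E (a, b) i))]
    congr 1
    · exact Finset.prod_congr rfl fun j _ => by rw [hEa]
    · exact Finset.prod_congr rfl fun j _ => by rw [hEb]
  have key : ∀ a, (∑ b, if (fun i => triVal F (E (a, b) i)) ∈ W then Pb b else 0) ≤
      (1 - μ) ^ (n - d) := by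
    intro a
    by_cases hex : ∃ b0, (fun i => triVal F (E (a, b0) i)) ∈ W
    · obtain ⟨b0, hb0⟩ := hex
      set c : {x // ¬ p x} → F := fun j => triVal F (b0 j) with hc
      have hdet : ∀ b, ((fun i => triVal F (E (a, b) i)) ∈ W) →
          ∀ j, triVal F (b j) = c j := by
        intro b hbmem j
        have hmem : (fun i => triVal F (E (a, b) i)) - (fun i => triVal F (E (a, b0) i)) ∈ W :=
          W.sub_mem hbmem hb0
        have hzero : ∀ i, p i →
            ((fun i => triVal F (E (a, b) i)) - (fun i => triVal F (E (a, b0) i))) i = 0 := by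
          intro i hpi
          have h1 : E (a, b) i = a ⟨i, hpi⟩ := hEa a b ⟨i, hpi⟩
          have h2 : E (a, b0) i = a ⟨i, hpi⟩ := hEa a b0 ⟨i, hpi⟩
          simp [h1, h2]
        have h0 := hS _ hmem hzero
        have h3 := congrFun h0 j.1
        rw [Pi.sub_apply, Pi.zero_apply, sub_eq_zero, hEb, hEb] at h3
        exact h3
      calc (∑ b, if (fun i => triVal F (E (a, b) i)) ∈ W then Pb b else 0)
          ≤ ∑ b, if (∀ j, triVal F (b j) = c j) then Pb b else 0 := by
            refine Finset.sum_le_sum fun b _ => ?_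
            split_ifs with h1 h2 h2
            · exact le_refl _
            · exact absurd (hdet b h1) h2
            · exact hPb0 b
            · exact le_refl _
        _ = ∑ b : {x // ¬ p x} → Fin 3, ∏ j,
              (if triVal F (b j) = c j then triWeight μ (b j) else 0) := by
            exact Finset.sum_congr rfl fun b _ => (Fintype.prod_ite_zero).symm
        _ = ∏ j : {x // ¬ p x}, ∑ x : Fin 3,
              (if triVal F x = c j then triWeight μ x else 0) :=
            (Fintype.prod_sum fun j x => if triVal F x = c j then triWeight μ x else 0).symm
        _ ≤ ∏ _j : {x // ¬ p x}, (1 - μ) :=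
            Finset.prod_le_prod
              (fun j _ => Finset.sum_nonneg fun x _ => by
                split_ifs
                · exact triWeight_nonneg hμ0 hμ x
                · exact le_refl _)
              (fun j _ => fiber_bound hμ0 hμ _)
        _ = (1 - μ) ^ (n - d) := by rw [Finset.prod_const, Finset.card_univ, hcard]
    · have hz : (∑ b, if (fun i => triVal F (E (a, b) i)) ∈ W then Pb b else 0) = 0 :=
        Finset.sum_eq_zero fun b _ => if_neg fun h => hex ⟨b, h⟩
      rw [hz]
      positivity
  calc ∑ s : Fin n → Fin 3,
        (if (fun i => triVal F (s i)) ∈ W then ∏ i, triWeight μ (s i) else 0)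
      = ∑ x : ({x // p x} → Fin 3) × ({x // ¬ p x} → Fin 3),
          (if (fun i => triVal F (E x i)) ∈ W then ∏ i, triWeight μ (E x i) else 0) :=
        (E.sum_comp _).symm
    _ = ∑ a, ∑ b, (if (fun i => triVal F (E (a, b) i)) ∈ W then Pa a * Pb b else 0) := by
        rw [Fintype.sum_prod_type]
        exact Finset.sum_congr rfl fun a _ => Finset.sum_congr rfl fun b _ => by
          rw [hprod]
    _ = ∑ a, Pa a * ∑ b, (if (fun i => triVal F (E (a, b) i)) ∈ W then Pb b else 0) := by
        refine Finset.sum_congr rfl fun a _ => ?_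
        rw [Finset.mul_sum]
        exact Finset.sum_congr rfl fun b _ => by rw [mul_ite, mul_zero]
    _ ≤ ∑ a, Pa a * (1 - μ) ^ (n - d) :=
        Finset.sum_le_sum fun a _ => mul_le_mul_of_nonneg_left (key a) (hPa0 a)
    _ = (∑ a, Pa a) * (1 - μ) ^ (n - d) := (Finset.sum_mul _ _ _).symm
    _ = 1 * (1 - μ) ^ (n - d) := by
        congr 1
        rw [hPa, ← Fintype.prod_sum (fun (_ : {x // p x}) x => triWeight μ x)]
        simp [sum_triWeight]
    _ = (1 - μ) ^ (n - d) := one_mul _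
end

section
/- (Sum set estimate via Ruzsa covering) Let A be a finite symmetric non-empty subset of an abelian group G with |4A| ≤ C|A| for some C ≥ 1. Then for every integer k ≥ 4, |kA| ≤ binom(⌊C⌋+k-3, k-2) · C · |A|. -/
open scoped Pointwise

/-- The `k`-fold iterated sumset `kA = {a₁ + ⋯ + a_k : aᵢ ∈ A}` of a finite set in an
abelian group (with `0A = {0}`). -/
def iterSumset {G : Type*} [AddCommGroup G] [DecidableEq G] (A : Finset G) : ℕ → Finset G
  | 0 => {0}
  | k + 1 => iterSumset A k + A

section aux
variable {G : Type*} [AddCommGroup G] [DecidableEq G]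

lemma iterSumset_exists_multiset (F : Finset G) :
    ∀ l, ∀ x ∈ iterSumset F l,
      ∃ m : Multiset G, Multiset.card m = l ∧ (∀ a ∈ m, a ∈ F) ∧ m.sum = x
  | 0, x, hx => by
      simp only [iterSumset, Finset.mem_singleton] at hx
      exact ⟨0, by simp [hx]⟩
  | l + 1, x, hx => by
      simp only [iterSumset, Finset.mem_add] at hx
      obtain ⟨y, hy, a, ha, rfl⟩ := hx
      obtain ⟨m, hcard, hmem, hsum⟩ := iterSumset_exists_multiset F l y hy
      refine ⟨a ::ₘ m, by simp [hcard], ?_, by simp [hsum, add_comm]⟩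
      intro b hb
      rcases Multiset.mem_cons.1 hb with rfl | hb
      · exact ha
      · exact hmem b hb

lemma card_iterSumset_le (F : Finset G) (l : ℕ) :
    (iterSumset F l).card ≤ (F.card + l - 1).choose l := by
  classical
  have hsurj : Set.SurjOn
      (fun s : Sym {x // x ∈ F} l => ((s : Multiset {x // x ∈ F}).map Subtype.val).sum)
      (Finset.univ : Finset (Sym {x // x ∈ F} l)) (iterSumset F l) := by
    intro x hx
    obtain ⟨m, hcard, hmem, hsum⟩ := iterSumset_exists_multiset F l x hx
    refine ⟨⟨m.pmap (fun a h => (⟨a, h⟩ : {x // x ∈ F})) hmem, by simp [hcard]⟩, Finset.mem_coe.2 (Finset.mem_univ _), ?_⟩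
    show (Multiset.map Subtype.val (m.pmap (fun a h => (⟨a, h⟩ : {x // x ∈ F})) hmem)).sum = x
    rw [Multiset.map_pmap, Multiset.pmap_eq_map]
    simpa using hsum
  have := Finset.card_le_card_of_surjOn _ hsurj
  calc (iterSumset F l).card ≤ (Finset.univ : Finset (Sym {x // x ∈ F} l)).card := this
    _ = Fintype.card (Sym {x // x ∈ F} l) := rfl
    _ = Nat.multichoose (Fintype.card {x // x ∈ F}) l := Sym.card_sym_eq_multichoose _ _
    _ = (F.card + l - 1).choose l := by rw [Nat.multichoose_eq, Fintype.card_coe]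

lemma iterSumset_subset_add_two (A : Finset G) (hA : A.Nonempty) (hsym : -A = A) (k : ℕ) :
    iterSumset A k ⊆ iterSumset A (k + 2) := by
  obtain ⟨a, ha⟩ := hA
  have hna : -a ∈ A := by rw [← hsym]; simpa using ha
  intro x hx
  have : (x + a) + (-a) ∈ (iterSumset A k + A) + A :=
    Finset.add_mem_add (Finset.add_mem_add hx ha) hna
  simpa [iterSumset] using this

end aux

/-- Sum set estimate via the Ruzsa covering argument: if `A` is symmetric, non-empty and
`|4A| ≤ C|A|`, then `|kA| ≤ binom(⌊C⌋+k-3, k-2)·C·|A|` for every `k ≥ 4`. -/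
theorem iter_sumset_growth {G : Type*} [AddCommGroup G] [DecidableEq G]
    (A : Finset G) (hA : A.Nonempty) (hsym : -A = A) (C : ℝ) (hC : 1 ≤ C)
    (h4 : ((iterSumset A 4).card : ℝ) ≤ C * A.card) :
    ∀ k : ℕ, 4 ≤ k →
      ((iterSumset A k).card : ℝ) ≤ (Nat.choose (⌊C⌋₊ + k - 3) (k - 2)) * C * A.card := by
  -- Ruzsa covering: find F ⊆ 3A with #F ≤ C and 3A ⊆ F + (A - A)
  obtain ⟨F, hFA, hFcard, hcover⟩ :=
    Finset.ruzsa_covering_add (A := iterSumset A 3) (B := A) hA h4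
  have hAA : A - A = iterSumset A 2 := by
    have : iterSumset A 2 = A + A := by
      show ({0} + A) + A = A + A
      rw [Finset.singleton_add, zero_vadd]
    rw [this, sub_eq_add_neg, hsym]
  rw [hAA] at hcover
  have hF : F.card ≤ ⌊C⌋₊ := Nat.le_floor hFcard
  -- key induction: (m+3)A ⊆ (m+1)F + 2A
  have key : ∀ m : ℕ, iterSumset A (m + 3) ⊆ iterSumset F (m + 1) + iterSumset A 2 := by
    intro m
    induction m with
    | zero =>
        refine hcover.trans ?_
        intro x hx
        have h1 : iterSumset F 1 = F := by
          show ({0} + F) = F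
          rw [Finset.singleton_add, zero_vadd]
        rw [h1]
        exact hx
    | succ n ih =>
        have : iterSumset A (n + 4) = iterSumset A (n + 3) + A := rfl
        intro x hx
        rw [show n + 1 + 3 = n + 3 + 1 from rfl] at hx
        have hx' : x ∈ (iterSumset F (n + 1) + iterSumset A 2) + A :=
          Finset.add_subset_add_right ih hx
        have h3 : x ∈ iterSumset F (n + 1) + iterSumset A 3 := by
          rwa [show iterSumset F (n+1) + iterSumset A 3
              = (iterSumset F (n+1) + iterSumset A 2) + A from (add_assoc _ _ _).symm]
        have h4' : x ∈ iterSumset F (n + 1) + (F + iterSumset A 2) :=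
          Finset.add_subset_add_left hcover h3
        rwa [show iterSumset F (n+1) + (F + iterSumset A 2)
            = iterSumset F (n + 2) + iterSumset A 2 from by
          rw [← add_assoc]; rfl] at h4'
  intro k hk
  obtain ⟨m, rfl⟩ := Nat.exists_eq_add_of_le hk
  have hsub : iterSumset A (4 + m) ⊆ iterSumset F (m + 2) + iterSumset A 2 := by
    rw [show 4 + m = (m + 1) + 3 from by omega]
    exact (key (m + 1))
  have h2le : ((iterSumset A 2).card : ℝ) ≤ C * A.card := by
    refine le_trans ?_ h4
    exact_mod_cast Finset.card_le_card (iterSumset_subset_add_two A hA hsym 2)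
  have hFle : ((iterSumset F (m + 2)).card : ℝ) ≤ (Nat.choose (⌊C⌋₊ + (4 + m) - 3) (4 + m - 2)) := by
    have h1 : (iterSumset F (m + 2)).card ≤ (F.card + (m + 2) - 1).choose (m + 2) :=
      card_iterSumset_le F (m + 2)
    have h2 : (F.card + (m + 2) - 1).choose (m + 2) ≤ (⌊C⌋₊ + (4 + m) - 3).choose (4 + m - 2) := by
      rw [show 4 + m - 2 = m + 2 from by omega]
      exact Nat.choose_le_choose _ (by omega)
    exact_mod_cast h1.trans h2
  calc ((iterSumset A (4 + m)).card : ℝ)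
      ≤ ((iterSumset F (m + 2) + iterSumset A 2).card : ℝ) := by
        exact_mod_cast Finset.card_le_card hsub
    _ ≤ ((iterSumset F (m + 2)).card : ℝ) * ((iterSumset A 2).card : ℝ) := by
        exact_mod_cast Finset.card_add_le
    _ ≤ (Nat.choose (⌊C⌋₊ + (4 + m) - 3) (4 + m - 2)) * (C * A.card) := by
        refine mul_le_mul hFle h2le (by positivity) (by positivity)
    _ = (Nat.choose (⌊C⌋₊ + (4 + m) - 3) (4 + m - 2)) * C * A.card := by ring
end

section
/- (Ruzsa covering step) Let A be a finite symmetric non-empty subset of an abelian group G with |4A| ≤ C|A|. Then there exists a set X ⊆ 3A with |X| ≤ C such that kA ⊆ 2A + (k-2)X for all integers k ≥ 2. -/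
open scoped Pointwise

/-- Ruzsa covering step: if `A` is symmetric, non-empty and `|4A| ≤ C|A|`, then there is
`X ⊆ 3A` with `|X| ≤ C` such that `kA ⊆ 2A + (k-2)X` for all `k ≥ 2`. -/
theorem ruzsa_covering_step {G : Type*} [AddCommGroup G] [DecidableEq G]
    (A : Finset G) (hA : A.Nonempty) (hsym : -A = A) (C : ℝ)
    (h4 : ((iterSumset A 4).card : ℝ) ≤ C * A.card) :
    ∃ X : Finset G, X ⊆ iterSumset A 3 ∧ (X.card : ℝ) ≤ C ∧
      ∀ k : ℕ, 2 ≤ k → iterSumset A k ⊆ iterSumset A 2 + iterSumset X (k - 2) := by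
  have h4' : ((iterSumset A 3 + A).card : ℝ) ≤ C * A.card := h4
  obtain ⟨X, hX3, hXc, hcov⟩ := Finset.ruzsa_covering_add hA h4'
  have h2 : iterSumset A 2 = A + A := by
    simp [iterSumset, Finset.singleton_add, Finset.image_add_left]
  have hcov' : iterSumset A 3 ⊆ iterSumset A 2 + X := by
    intro x hx
    have := hcov hx
    rw [sub_eq_add_neg, hsym] at this
    rw [add_comm] at this
    rw [h2]
    simpa [add_assoc] using this
  refine ⟨X, hX3, hXc, ?_⟩
  intro k hk
  obtain ⟨m, rfl⟩ := Nat.exists_eq_add_of_le hk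
  clear hk
  rw [Nat.add_sub_cancel_left]
  induction m with
  | zero =>
    intro x hx
    exact Finset.mem_add.2 ⟨x, hx, 0, by simp [iterSumset], by simp⟩
  | succ n ih =>
    have step1 : iterSumset A (2 + (n + 1)) ⊆ (iterSumset A 2 + iterSumset X n) + A := by
      show iterSumset A (2 + n) + A ⊆ _
      exact Finset.add_subset_add_right ih
    intro x hx
    have hx1 := step1 hx
    have : (iterSumset A 2 + iterSumset X n) + A = (iterSumset A 2 + A) + iterSumset X n := by
      rw [add_assoc, add_comm (iterSumset X n) A, add_assoc]
    rw [this] at hx1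
    have h3 : iterSumset A 2 + A = iterSumset A 3 := rfl
    rw [h3] at hx1
    have : iterSumset A 3 + iterSumset X n ⊆ (iterSumset A 2 + X) + iterSumset X n :=
      Finset.add_subset_add_right hcov'
    have hx2 := this hx1
    rw [add_assoc, add_comm X (iterSumset X n)] at hx2
    exact hx2
end

section
/- Let Λ be a non-empty finite subset of F = ℤ/pℤ and h(x) := (1/|Λ|) Σ_{ξ∈Λ} e_p(xξ). With ‖x‖_Λ defined as ( (1/|Λ|²) Σ_{ξ,ξ'∈Λ} ‖x(ξ-ξ')/p‖² )^{1/2}, one has 1 - 100‖x‖_Λ² ≤ |h(x)|² ≤ 1 - (1/100)‖x‖_Λ² for all x ∈ F. -/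
open Real Complex

lemma cos_two_pi_bounds (t : ℝ) :
    1 - 100 * ‖((t : ℝ) : UnitAddCircle)‖ ^ 2 ≤ Real.cos (2 * π * t) ∧
    Real.cos (2 * π * t) ≤ 1 - (1 / 100) * ‖((t : ℝ) : UnitAddCircle)‖ ^ 2 := by
  have hs : ‖((t : ℝ) : UnitAddCircle)‖ = |t - round t| := UnitAddCircle.norm_eq
  set s : ℝ := |t - round t| with hsdef
  have hs0 : (0:ℝ) ≤ s := abs_nonneg _
  have hs2 : s ≤ 1 / 2 := abs_sub_round t
  have hπ : 0 < π := Real.pi_pos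
  have hc : Real.cos (2 * π * t) = Real.cos (2 * π * s) := by
    have h1 : Real.cos (2 * π * (t - round t)) = Real.cos (2 * π * t) := by
      rw [show 2 * π * (t - round t) = 2 * π * t - (round t : ℤ) * (2 * π) by
        push_cast; ring]
      exact Real.cos_sub_int_mul_two_pi _ _
    have h2 : 2 * π * s = |2 * π * (t - round t)| := by
      rw [hsdef, abs_mul, abs_of_pos (by positivity : (0:ℝ) < 2 * π)]
    rw [h2, Real.cos_abs, h1]
  rw [hs, hc]
  constructor
  · have h1 : 1 - (2 * π * s) ^ 2 / 2 ≤ Real.cos (2 * π * s) :=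
      Real.one_sub_sq_div_two_le_cos
    have h16 : π ^ 2 ≤ 16 := by nlinarith [Real.pi_le_four, Real.pi_pos]
    nlinarith [h16, sq_nonneg s, mul_nonneg (mul_nonneg hs0 hs0) (sq_nonneg π)]
  · have hsin : 2 / π * (π * s) ≤ Real.sin (π * s) :=
      Real.mul_le_sin (by positivity) (by nlinarith)
    have h2s : 2 * s ≤ Real.sin (π * s) := by
      have : 2 / π * (π * s) = 2 * s := by field_simp
      linarith [this ▸ hsin]
    have hcos2 : Real.cos (2 * π * s) = 1 - 2 * Real.sin (π * s) ^ 2 := by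
      rw [show 2 * π * s = 2 * (π * s) by ring, Real.cos_two_mul',
        Real.cos_sq']
      ring
    nlinarith [sq_nonneg s]

lemma re_mul_conj_exp (a b : ℝ) :
    (Complex.exp ((a : ℂ) * Complex.I) *
      (starRingEnd ℂ) (Complex.exp ((b : ℂ) * Complex.I))).re = Real.cos (a - b) := by
  rw [← Complex.exp_conj, map_mul, Complex.conj_ofReal, Complex.conj_I, ← Complex.exp_add,
    show ((a : ℂ) * Complex.I + (b : ℂ) * -Complex.I) = ((a - b : ℝ) : ℂ) * Complex.I by
      push_cast; ring]
  exact Complex.exp_ofReal_mul_I_re _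

/-- The Λ-norm `‖x‖_Λ = ((1/|Λ|²) Σ_{ξ,ξ'∈Λ} ‖x(ξ-ξ')/p‖²)^{1/2}`, where `‖t‖` on
`UnitAddCircle` is the distance of the real number `t` to the nearest integer. -/
noncomputable def lambdaNorm (p : ℕ) (Λ : Finset (ZMod p)) (x : ZMod p) : ℝ :=
  Real.sqrt ((1 / (Λ.card : ℝ) ^ 2) *
    ∑ ξ ∈ Λ, ∑ ξ' ∈ Λ, ‖((((x * (ξ - ξ')).val : ℝ) / p : ℝ) : UnitAddCircle)‖ ^ 2)

/-- Comparison of `|h(x)|²` with the Λ-norm, where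
`h(x) = (1/|Λ|) Σ_{ξ∈Λ} e_p(xξ)`: one has
`1 - 100‖x‖_Λ² ≤ |h(x)|² ≤ 1 - (1/100)‖x‖_Λ²`. -/
theorem abs_h_sq_lambdaNorm_bounds (p : ℕ) [Fact p.Prime] (Λ : Finset (ZMod p))
    (hΛ : Λ.Nonempty) (x : ZMod p) :
    1 - 100 * lambdaNorm p Λ x ^ 2 ≤
      ‖((1 / (Λ.card : ℂ)) *
        ∑ ξ ∈ Λ, Complex.exp (2 * π * Complex.I * ((x * ξ).val : ℝ) / p))‖ ^ 2 ∧
    ‖((1 / (Λ.card : ℂ)) *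
        ∑ ξ ∈ Λ, Complex.exp (2 * π * Complex.I * ((x * ξ).val : ℝ) / p))‖ ^ 2 ≤
      1 - (1 / 100) * lambdaNorm p Λ x ^ 2 := by
  have hp : 0 < (p : ℝ) := by
    exact_mod_cast (Fact.out : p.Prime).pos
  have hpne : (p : ℝ) ≠ 0 := hp.ne'
  set n : ℝ := (Λ.card : ℝ) with hn_def
  have hn : 0 < n := by
    rw [hn_def]
    exact_mod_cast Finset.card_pos.mpr hΛ
  set w : ZMod p → ZMod p → ℝ := fun ξ ξ' =>
    ‖((((x * (ξ - ξ')).val : ℝ) / p : ℝ) : UnitAddCircle)‖ ^ 2 with hw_def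
  set W : ℝ := ∑ ξ ∈ Λ, ∑ ξ' ∈ Λ, w ξ ξ' with hW_def
  have hWnn : 0 ≤ W := by
    apply Finset.sum_nonneg; intro ξ _
    apply Finset.sum_nonneg; intro ξ' _
    positivity
  -- lambdaNorm squared
  have hln : lambdaNorm p Λ x ^ 2 = (1 / n ^ 2) * W := by
    rw [lambdaNorm, Real.sq_sqrt]
    positivity
  -- cosine periodicity
  have keycos : ∀ ξ ξ' : ZMod p,
      Real.cos (2 * π * (((x * ξ).val : ℝ) / p) - 2 * π * (((x * ξ').val : ℝ) / p))
        = Real.cos (2 * π * (((x * (ξ - ξ')).val : ℝ) / p)) := by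
    intro ξ ξ'
    have hdvd : (p : ℤ) ∣ ((x * ξ).val : ℤ) - ((x * ξ').val : ℤ) - ((x * (ξ - ξ')).val : ℤ) := by
      rw [← ZMod.intCast_zmod_eq_zero_iff_dvd]
      push_cast
      rw [ZMod.natCast_val, ZMod.natCast_val, ZMod.natCast_val,
        ZMod.cast_id, ZMod.cast_id, ZMod.cast_id]
      ring
    obtain ⟨k, hk⟩ := hdvd
    have hk' : ((x * ξ).val : ℝ) - ((x * ξ').val : ℝ)
        = ((x * (ξ - ξ')).val : ℝ) + k * p := by
      have := congrArg (fun z : ℤ => (z : ℝ)) hk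
      push_cast at this
      linarith
    have h5 : (((x * ξ).val : ℝ) - ((x * ξ').val : ℝ)) / p
        = ((x * (ξ - ξ')).val : ℝ) / p + k := by
      rw [hk', add_div, mul_div_assoc, div_self hpne, mul_one]
    have h3 : 2 * π * (((x * ξ).val : ℝ) / p) - 2 * π * (((x * ξ').val : ℝ) / p)
        = 2 * π * (((x * (ξ - ξ')).val : ℝ) / p) + k * (2 * π) := by
      rw [show 2 * π * (((x * ξ).val : ℝ) / p) - 2 * π * (((x * ξ').val : ℝ) / p)
          = 2 * π * ((((x * ξ).val : ℝ) - ((x * ξ').val : ℝ)) / p) by ring, h5]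
      ring
    rw [h3, Real.cos_add_int_mul_two_pi]
  -- |S|^2 as double cosine sum
  set S : ℂ := ∑ ξ ∈ Λ, Complex.exp (2 * π * Complex.I * ((x * ξ).val : ℝ) / p) with hS_def
  have hfe : S = ∑ ξ ∈ Λ,
      Complex.exp (((2 * π * (((x * ξ).val : ℝ) / p) : ℝ) : ℂ) * Complex.I) := by
    rw [hS_def]
    exact Finset.sum_congr rfl fun ξ _ => congrArg Complex.exp (by push_cast; ring)
  have hre : (S * (starRingEnd ℂ) S).re
      = ∑ ξ ∈ Λ, ∑ ξ' ∈ Λ, Real.cos (2 * π * (((x * (ξ - ξ')).val : ℝ) / p)) := by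
    rw [hfe, map_sum, Finset.sum_mul_sum, Complex.re_sum]
    refine Finset.sum_congr rfl fun ξ _ => ?_
    rw [Complex.re_sum]
    refine Finset.sum_congr rfl fun ξ' _ => ?_
    rw [re_mul_conj_exp, keycos]
  have habs : ‖((1 / (Λ.card : ℂ)) * S)‖ ^ 2
      = (1 / n ^ 2) * (S * (starRingEnd ℂ) S).re := by
    have h1 : Complex.normSq (1 / (Λ.card : ℂ)) = 1 / n ^ 2 := by
      rw [← Complex.sq_norm, norm_div, norm_one, Complex.norm_natCast, div_pow, one_pow, hn_def]
    have h2 : (S * (starRingEnd ℂ) S).re = Complex.normSq S := by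
      rw [Complex.mul_conj, Complex.ofReal_re]
    rw [norm_mul, mul_pow, Complex.sq_norm, Complex.sq_norm, h2, h1]
  -- sum bounds
  have hlow : n ^ 2 - 100 * W ≤ ∑ ξ ∈ Λ, ∑ ξ' ∈ Λ,
      Real.cos (2 * π * (((x * (ξ - ξ')).val : ℝ) / p)) := by
    have h := Finset.sum_le_sum (s := Λ) fun ξ (_ : ξ ∈ Λ) =>
      Finset.sum_le_sum (s := Λ) fun ξ' (_ : ξ' ∈ Λ) =>
        (cos_two_pi_bounds (((x * (ξ - ξ')).val : ℝ) / p)).1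
    calc n ^ 2 - 100 * W
        = ∑ ξ ∈ Λ, ∑ ξ' ∈ Λ, (1 - 100 * w ξ ξ') := by
          simp only [Finset.sum_sub_distrib, Finset.sum_const, nsmul_eq_mul, mul_one,
            ← Finset.mul_sum, hW_def, hn_def]
          ring
      _ ≤ _ := h
  have hhigh : (∑ ξ ∈ Λ, ∑ ξ' ∈ Λ,
      Real.cos (2 * π * (((x * (ξ - ξ')).val : ℝ) / p))) ≤ n ^ 2 - (1 / 100) * W := by
    have h := Finset.sum_le_sum (s := Λ) fun ξ (_ : ξ ∈ Λ) =>
      Finset.sum_le_sum (s := Λ) fun ξ' (_ : ξ' ∈ Λ) =>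
        (cos_two_pi_bounds (((x * (ξ - ξ')).val : ℝ) / p)).2
    calc (∑ ξ ∈ Λ, ∑ ξ' ∈ Λ, Real.cos (2 * π * (((x * (ξ - ξ')).val : ℝ) / p)))
        ≤ ∑ ξ ∈ Λ, ∑ ξ' ∈ Λ, (1 - (1 / 100) * w ξ ξ') := h
      _ = n ^ 2 - (1 / 100) * W := by
          simp only [Finset.sum_sub_distrib, Finset.sum_const, nsmul_eq_mul, mul_one,
            ← Finset.mul_sum, hW_def, hn_def]
          ring
  have hn2 : (0:ℝ) < 1 / n ^ 2 := by positivity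
  rw [habs, hre, hln]
  constructor
  · have := mul_le_mul_of_nonneg_left hlow hn2.le
    have he : (1 / n ^ 2) * (n ^ 2 - 100 * W) = 1 - 100 * ((1 / n ^ 2) * W) := by
      field_simp
    linarith [he ▸ this]
  · have := mul_le_mul_of_nonneg_left hhigh hn2.le
    have he : (1 / n ^ 2) * (n ^ 2 - (1 / 100) * W) = 1 - (1 / 100) * ((1 / n ^ 2) * W) := by
      field_simp
    linarith [he ▸ this]
end

section
/- (Progressions lie in proper progressions) There is an absolute constant C₀ such that: if P is a symmetric generalized arithmetic progression of rank d in an abelian group G, and every non-zero element of G has order at least d^{C₀d³}|P|, then there exists a proper symmetric generalized arithmetic progression Q of rank at most d containing P with |Q| ≤ d^{C₀d³}|P|. -/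
namespace PIP

open Matrix BigOperators

variable {d : ℕ}

/-- weighted inner product on `ℤ^d` -/
def inn (N : Fin d → ℕ) (x y : Fin d → ℤ) : ℤ := ∑ j, (N j : ℤ)^2 * (x j * y j)

/-- weighted squared norm -/
def q (N : Fin d → ℕ) (x : Fin d → ℤ) : ℤ := inn N x x

lemma inn_comm (N : Fin d → ℕ) (x y : Fin d → ℤ) : inn N x y = inn N y x := by
  unfold inn; congr 1; ext j; ring

lemma q_nonneg (N : Fin d → ℕ) (x : Fin d → ℤ) : 0 ≤ q N x := by
  unfold q inn
  apply Finset.sum_nonneg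
  intro j _
  have h1 : (0:ℤ) ≤ (N j : ℤ)^2 := sq_nonneg _
  have h2 : (0:ℤ) ≤ x j * x j := mul_self_nonneg _
  positivity

lemma q_pos (N : Fin d → ℕ) (hN : ∀ j, 0 < N j) (x : Fin d → ℤ) (hx : x ≠ 0) :
    0 < q N x := by
  obtain ⟨i, hi⟩ : ∃ i, x i ≠ 0 := by
    by_contra h; push_neg at h; exact hx (funext h)
  unfold q inn
  have : ∀ j ∈ Finset.univ, (0:ℤ) ≤ (N j : ℤ)^2 * (x j * x j) := by
    intro j _
    have := mul_self_nonneg (x j); positivity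
  apply Finset.sum_pos' this ⟨i, Finset.mem_univ i, ?_⟩
  have h1 : (0:ℤ) < (N i : ℤ)^2 := by
    have := hN i; positivity
  have h2 : (0:ℤ) < x i * x i := by
    rcases lt_or_gt_of_ne hi with h | h
    · nlinarith
    · nlinarith
  positivity

lemma q_smul (N : Fin d → ℕ) (c : ℤ) (x : Fin d → ℤ) : q N (c • x) = c^2 * q N x := by
  unfold q inn
  rw [Finset.mul_sum]
  congr 1; ext j; simp [Pi.smul_apply, smul_eq_mul]; ring

/-- key identity: `q (α•x − β•b) = α²q x − 2αβ⟨x,b⟩ + β² q b` -/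
lemma q_sub_smul (N : Fin d → ℕ) (α β : ℤ) (x b : Fin d → ℤ) :
    q N (fun j => α * x j - β * b j)
      = α^2 * q N x - 2*α*β * inn N x b + β^2 * q N b := by
  unfold q inn
  rw [Finset.mul_sum, Finset.mul_sum, Finset.mul_sum, ← Finset.sum_sub_distrib,
    ← Finset.sum_add_distrib]
  congr 1; ext j; ring


variable {d : ℕ}


/-- Gram matrix of the columns of `B`. -/
def gram (N : Fin d → ℕ) {r : ℕ} (B : Matrix (Fin d) (Fin r) ℤ) :
    Matrix (Fin r) (Fin r) ℤ :=
  Matrix.of fun k l => inn N (fun j => B j k) (fun j => B j l)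

lemma gram_eq (N : Fin d → ℕ) {r : ℕ} (B : Matrix (Fin d) (Fin r) ℤ) :
    gram N B = Bᵀ * Matrix.diagonal (fun j => (N j : ℤ)^2) * B := by
  ext k l
  simp only [gram, Matrix.of_apply, inn, Matrix.mul_apply, Matrix.diagonal_apply,
    Matrix.transpose_apply, mul_ite, mul_zero, ite_mul, zero_mul,
    Finset.sum_ite_eq, Finset.sum_ite_eq', Finset.mem_univ, if_true]
  congr 1; ext j; ring

lemma gram_mul (N : Fin d → ℕ) {r s : ℕ} (B : Matrix (Fin d) (Fin r) ℤ)
    (T : Matrix (Fin r) (Fin s) ℤ) :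
    gram N (B * T) = Tᵀ * gram N B * T := by
  rw [gram_eq, gram_eq, Matrix.transpose_mul]
  simp only [Matrix.mul_assoc]

lemma det_gram_mul (N : Fin d → ℕ) {r : ℕ} (B : Matrix (Fin d) (Fin r) ℤ)
    (T : Matrix (Fin r) (Fin r) ℤ) :
    (gram N (B * T)).det = T.det ^ 2 * (gram N B).det := by
  rw [gram_mul, Matrix.det_mul, Matrix.det_mul, Matrix.det_transpose]; ring

/-- determinant of a matrix whose first column is supported on the first entry -/
lemma det_bordered {r : ℕ} (M : Matrix (Fin (r+1)) (Fin (r+1)) ℤ)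
    (h0 : ∀ i : Fin r, M i.succ 0 = 0) :
    M.det = M 0 0 * (M.submatrix Fin.succ Fin.succ).det := by
  rw [Matrix.det_succ_column_zero]
  rw [Fin.sum_univ_succ]
  simp [h0, Fin.succAbove_zero]


lemma natAbs_emod_lt (a b : ℤ) (hb : b ≠ 0) : (a % b).natAbs < b.natAbs := by
  have h1 := Int.emod_nonneg a hb
  rcases lt_or_gt_of_ne hb with h | h
  · have hc : (0:ℤ) < -b := by omega
    have h2 := Int.emod_lt_of_pos a hc
    rw [Int.emod_neg] at h2
    omega
  · have h2 := Int.emod_lt_of_pos a h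
    omega

lemma stdBasis_mulVec {n : ℕ} (i j : Fin n) (c : ℤ) (z : Fin n → ℤ) :
    (Matrix.single i j c).mulVec z = fun k => if k = i then c * z j else 0 := by
  ext k
  simp [Matrix.single, Matrix.mulVec, dotProduct, ite_and, eq_comm]

lemma transvection_mulVec {n : ℕ} (i j : Fin n) (c : ℤ) (z : Fin n → ℤ) :
    (Matrix.transvection i j c).mulVec z = fun k => z k + if k = i then c * z j else 0 := by
  ext k
  simp [Matrix.transvection, Matrix.add_mulVec, stdBasis_mulVec, Matrix.one_mulVec]

/-- Euclid: any integer vector can be carried by a unimodular matrix to a multiple of e₀. -/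
lemma euclid {r : ℕ} (z : Fin (r+1) → ℤ) :
    ∃ (U : Matrix (Fin (r+1)) (Fin (r+1)) ℤ) (c : ℤ),
      IsUnit U.det ∧ U.mulVec z = Pi.single 0 c := by
  generalize hn : (∑ i, (z i).natAbs) = n
  induction n using Nat.strong_induction_on generalizing z with
  | _ n IH =>
  by_cases hpair : ∃ i j, i ≠ j ∧ z i ≠ 0 ∧ z j ≠ 0
  · -- two distinct nonzero entries; order them
    obtain ⟨i0, j0, hij0, hzi0, hzj0⟩ := hpair
    obtain ⟨i, j, hij, hzi, hzj, hle⟩ :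
        ∃ i j, i ≠ j ∧ z i ≠ 0 ∧ z j ≠ 0 ∧ (z j).natAbs ≤ (z i).natAbs := by
      rcases le_total ((z j0).natAbs) ((z i0).natAbs) with h | h
      · exact ⟨i0, j0, hij0, hzi0, hzj0, h⟩
      · exact ⟨j0, i0, hij0.symm, hzj0, hzi0, h⟩
    set c : ℤ := -(z i / z j) with hc
    set z' : Fin (r+1) → ℤ := fun k => z k + if k = i then c * z j else 0 with hz'
    have hz'i : z' i = z i % z j := by
      have h := Int.mul_ediv_add_emod (z i) (z j)
      simp only [hz', hc, eq_self_iff_true, if_true]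
      linarith [h]
    have hz'k : ∀ k, k ≠ i → z' k = z k := by
      intro k hk; simp [hz', hk]
    have hemod := natAbs_emod_lt (z i) (z j) hzj
    have hdec : (∑ k, (z' k).natAbs) < n := by
      rw [← hn]
      apply Finset.sum_lt_sum
      · intro k _
        by_cases hk : k = i
        · subst hk
          rw [hz'i]
          omega
        · rw [hz'k k hk]
      · refine ⟨i, Finset.mem_univ i, ?_⟩
        rw [hz'i]
        omega
    obtain ⟨U', c', hU', hU'z⟩ := IH _ hdec z' rfl
    refine ⟨U' * Matrix.transvection i j c, c', ?_, ?_⟩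
    · rw [Matrix.det_mul, Matrix.det_transvection_of_ne i j hij]
      simpa using hU'
    · rw [← Matrix.mulVec_mulVec, transvection_mulVec]
      exact hU'z
  · -- at most one nonzero entry
    by_cases hz0 : z = 0
    · refine ⟨1, 0, by simp, ?_⟩
      simp [hz0]
    · obtain ⟨i0, hi0⟩ : ∃ i, z i ≠ 0 := by
        by_contra h; push_neg at h; exact hz0 (funext h)
      have hunique : ∀ k, k ≠ i0 → z k = 0 := by
        intro k hk
        by_contra hzk
        exact hpair ⟨k, i0, hk, hzk, hi0⟩
      set σ := Equiv.swap (0 : Fin (r+1)) i0 with hσ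
      refine ⟨(1 : Matrix (Fin (r+1)) (Fin (r+1)) ℤ).submatrix σ id, z i0, ?_, ?_⟩
      · rw [Matrix.det_permute σ 1, Matrix.det_one, mul_one]
        rcases Int.units_eq_one_or (Equiv.Perm.sign σ) with h | h <;>
          rw [h] <;> simp [Int.isUnit_iff]
      · ext k
        have hmv : ((1 : Matrix (Fin (r+1)) (Fin (r+1)) ℤ).submatrix σ id).mulVec z k
            = z (σ k) := by
          simp [Matrix.mulVec, Matrix.submatrix, Matrix.one_apply, dotProduct, eq_comm]
        rw [hmv]
        by_cases hk : k = 0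
        · subst hk
          simp [hσ, Equiv.swap_apply_left]
        · rw [Pi.single_eq_of_ne hk]
          by_cases hki : k = i0
          · subst hki
            simp only [hσ, Equiv.swap_apply_right]
            exact hunique 0 (Ne.symm hk)
          · rw [hσ, Equiv.swap_apply_of_ne_of_ne hk hki]
            exact hunique k hki


lemma sq_det_unit {n : ℕ} {T : Matrix (Fin n) (Fin n) ℤ} (h : IsUnit T.det) :
    T.det ^ 2 = 1 := by
  rcases Int.isUnit_iff.mp h with h' | h' <;> rw [h'] <;> ring

lemma near_div (a b : ℤ) (hb : 0 < b) : ∃ t : ℤ, 2 * |a - t * b| ≤ b := by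
  refine ⟨(2*a + b) / (2*b), ?_⟩
  have h2b : (0:ℤ) < 2*b := by omega
  have h1 := Int.emod_nonneg (2*a + b) (by omega : (2:ℤ)*b ≠ 0)
  have h2 := Int.emod_lt_of_pos (2*a + b) h2b
  have h3 := Int.mul_ediv_add_emod (2*a + b) (2*b)
  set t := (2*a + b) / (2*b) with ht
  set ρ := (2*a + b) % (2*b) with hρ
  have : 2*(a - t*b) = ρ - b := by linarith
  rcases abs_cases (a - t*b) with ⟨he, _⟩ | ⟨he, _⟩ <;> omega

-- for a primitive vector, Euclid gives exactly `e₀`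
lemma euclid_one {r : ℕ} (z : Fin (r+1) → ℤ) (hz : z ≠ 0)
    (hprim : ∀ e : ℤ, 0 < e → (∀ i, e ∣ z i) → e = 1) :
    ∃ U : Matrix (Fin (r+1)) (Fin (r+1)) ℤ,
      IsUnit U.det ∧ U.mulVec z = Pi.single 0 1 := by
  obtain ⟨U₀, c, hU₀, hU₀z⟩ := euclid z
  have hinv : U₀⁻¹ * U₀ = 1 := Matrix.nonsing_inv_mul U₀ hU₀
  have hz_eq : z = U₀⁻¹.mulVec (Pi.single 0 c) := by
    rw [← hU₀z, Matrix.mulVec_mulVec, hinv, Matrix.one_mulVec]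
  have hdvd : ∀ i, c ∣ z i := by
    intro i
    rw [hz_eq]
    have : U₀⁻¹.mulVec (Pi.single 0 c) i = U₀⁻¹ i 0 * c := by
      simp [Matrix.mulVec_single]
    rw [this]
    exact ⟨U₀⁻¹ i 0, mul_comm _ _⟩
  have hc0 : c ≠ 0 := by
    intro h
    apply hz
    rw [hz_eq, h]
    simp
  have habs : |c| = 1 := by
    apply hprim |c| (abs_pos.mpr hc0)
    intro i
    exact (abs_dvd _ _).mpr (hdvd i)
  rcases abs_eq (by norm_num : (0:ℤ) ≤ 1) |>.mp habs with hc | hc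
  · exact ⟨U₀, hU₀, by rw [hU₀z, hc]⟩
  · set D : Matrix (Fin (r+1)) (Fin (r+1)) ℤ :=
      Matrix.diagonal (fun k => if k = 0 then (-1:ℤ) else 1) with hD
    have hDdet : IsUnit D.det := by
      rw [hD, Matrix.det_diagonal]
      rw [Fin.prod_univ_succ]
      simp [Fin.succ_ne_zero, Int.isUnit_iff]
    refine ⟨D * U₀, ?_, ?_⟩
    · rw [Matrix.det_mul]; exact hDdet.mul hU₀
    rw [← Matrix.mulVec_mulVec, hU₀z, hc]
    ext k
    by_cases hk : k = 0
    · subst hk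
      simp [hD, Matrix.mulVec_diagonal]
    · simp [hD, Matrix.mulVec_diagonal, hk, Pi.single_eq_of_ne hk]

variable {d : ℕ}

lemma inn_sub_mul (N : Fin d → ℕ) (x y z : Fin d → ℤ) (b : ℤ) :
    inn N (fun j => x j - b * y j) z = inn N x z - b * inn N y z := by
  unfold inn
  rw [Finset.mul_sum, ← Finset.sum_sub_distrib]
  congr 1; ext j; ring

lemma inn_amul_sub_mul (N : Fin d → ℕ) (a b : ℤ) (x y z : Fin d → ℤ) :
    inn N (fun j => a * x j - b * y j) z = a * inn N x z - b * inn N y z := by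
  unfold inn
  rw [Finset.mul_sum, Finset.mul_sum, ← Finset.sum_sub_distrib]
  congr 1; ext j; ring

lemma inn_sum_left {m : ℕ} (N : Fin d → ℕ) (f : Fin m → ℤ) (V : Fin m → Fin d → ℤ)
    (z : Fin d → ℤ) :
    inn N (fun j => ∑ l, f l * V l j) z = ∑ l, f l * inn N (V l) z := by
  unfold inn
  simp only [Finset.mul_sum]
  rw [Finset.sum_comm]
  congr 1; ext j
  rw [Finset.sum_mul, Finset.mul_sum]
  congr 1; ext l; ring

lemma inn_zero_left (N : Fin d → ℕ) (z : Fin d → ℤ) :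
    inn N (0 : Fin d → ℤ) z = 0 := by
  unfold inn; simp

lemma indep_mul {r : ℕ} (B : Matrix (Fin d) (Fin r) ℤ) (T : Matrix (Fin r) (Fin r) ℤ)
    (hB : ∀ z : Fin r → ℤ, B.mulVec z = 0 → z = 0) (hT : IsUnit T.det) :
    ∀ z : Fin r → ℤ, (B * T).mulVec z = 0 → z = 0 := by
  intro z hz
  rw [← Matrix.mulVec_mulVec] at hz
  have h1 := hB _ hz
  have h2 : T⁻¹.mulVec (T.mulVec z) = T⁻¹.mulVec 0 := by rw [h1]
  rwa [Matrix.mulVec_mulVec, Matrix.nonsing_inv_mul T hT, Matrix.one_mulVec,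
    Matrix.mulVec_zero] at h2

set_option maxHeartbeats 2000000 in
/-- The weighted reduced basis theorem (Hermite–KZ style, crude constant). -/
theorem reduced_basis (N : Fin d → ℕ) (hN : ∀ j, 0 < N j) :
    ∀ (r : ℕ) (B : Matrix (Fin d) (Fin r) ℤ),
      (∀ z : Fin r → ℤ, B.mulVec z = 0 → z = 0) →
      0 ≤ (gram N B).det ∧
      ∃ T : Matrix (Fin r) (Fin r) ℤ, IsUnit T.det ∧
        ∏ k, q N (fun j => (B * T) j k) ≤ 4 ^ (r * r) * (gram N B).det := by
  intro r
  induction r with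
  | zero =>
    intro B _
    refine ⟨?_, 1, ?_, ?_⟩
    · rw [Matrix.det_fin_zero]; norm_num
    · rw [Matrix.det_one]; exact isUnit_one
    · simp [Matrix.det_fin_zero]
  | succ r IH =>
    intro B hB
    -- shortest nonzero vector of the lattice spanned by the columns of B
    set S : Set ℕ := {n | ∃ z : Fin (r+1) → ℤ, B.mulVec z ≠ 0 ∧ (q N (B.mulVec z)).toNat = n}
      with hS
    have hSne : S.Nonempty := by
      refine ⟨(q N (B.mulVec (Pi.single 0 1))).toNat, Pi.single 0 1, ?_, rfl⟩
      intro h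
      have h2 := hB _ h
      have h3 := congrFun h2 0
      simp at h3
    obtain ⟨z₁, hz₁ne, hz₁q⟩ := Nat.sInf_mem hSne
    set b₁ : Fin d → ℤ := B.mulVec z₁ with hb₁
    set α : ℤ := q N b₁ with hα
    have hαpos : 0 < α := q_pos N hN b₁ hz₁ne
    have hmin : ∀ w : Fin (r+1) → ℤ, B.mulVec w ≠ 0 → α ≤ q N (B.mulVec w) := by
      intro w hw
      have hmem : (q N (B.mulVec w)).toNat ∈ S := ⟨w, hw, rfl⟩
      have h1 := Nat.sInf_le hmem
      have h2 := q_nonneg N (B.mulVec w)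
      have h3 := q_nonneg N b₁
      omega
    -- z₁ is primitive
    have hprim : ∀ e : ℤ, 0 < e → (∀ i, e ∣ z₁ i) → e = 1 := by
      intro e he hdvd
      set z' : Fin (r+1) → ℤ := fun i => z₁ i / e with hz'
      have hz₁e : z₁ = e • z' := by
        ext i
        simp only [hz', Pi.smul_apply, smul_eq_mul]
        rw [Int.mul_ediv_cancel' (hdvd i)]
      have hBz' : B.mulVec z₁ = e • B.mulVec z' := by
        rw [hz₁e, Matrix.mulVec_smul]
      have hz'ne : B.mulVec z' ≠ 0 := by
        intro h
        apply hz₁ne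
        rw [hb₁, hBz', h, smul_zero]
      have hq : α = e^2 * q N (B.mulVec z') := by
        rw [hα, hb₁, hBz']
        exact q_smul N e (B.mulVec z')
      have hle := hmin z' hz'ne
      have hqpos := q_pos N hN _ hz'ne
      by_contra hne
      have h2e : 2 ≤ e := by omega
      have hsq : 4 ≤ e^2 := by nlinarith
      nlinarith [mul_le_mul_of_nonneg_right hsq hqpos.le]
    have hz₁0 : z₁ ≠ 0 := by
      intro h
      apply hz₁ne
      rw [hb₁, h, Matrix.mulVec_zero]
    obtain ⟨U, hU, hUz⟩ := euclid_one z₁ hz₁0 hprim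
    have hUinv1 : U⁻¹ * U = 1 := Matrix.nonsing_inv_mul U hU
    have hUinv2 : U * U⁻¹ = 1 := Matrix.mul_nonsing_inv U hU
    have hUinvUnit : IsUnit (U⁻¹).det := by
      apply IsUnit.of_mul_eq_one U.det
      rw [← Matrix.det_mul, hUinv1, Matrix.det_one]
    set B' : Matrix (Fin d) (Fin (r+1)) ℤ := B * U⁻¹ with hB'
    have hB'indep : ∀ w : Fin (r+1) → ℤ, B'.mulVec w = 0 → w = 0 :=
      indep_mul B U⁻¹ hB hUinvUnit
    have hb₁col : ∀ j, B' j 0 = b₁ j := by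
      have h1 : B'.mulVec (Pi.single 0 1) = b₁ := by
        rw [← hUz, Matrix.mulVec_mulVec, hB', Matrix.mul_assoc, hUinv1, Matrix.mul_one]
      intro j
      have h2 := congrFun h1 j
      simpa [Matrix.mulVec_single] using h2
    set β : Fin r → ℤ := fun k => inn N (fun j => B' j k.succ) b₁ with hβ
    set Efull : Matrix (Fin (r+1)) (Fin (r+1)) ℤ :=
      Matrix.of fun i l => Fin.cases (if i = 0 then (1:ℤ) else 0)
        (fun l' => if i = 0 then -(β l') else if i = l'.succ then α else 0) l with hEfull
    set B'' : Matrix (Fin d) (Fin (r+1)) ℤ := B' * Efull with hB''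
    have hB''0 : ∀ j, B'' j 0 = b₁ j := by
      intro j
      rw [hB'', Matrix.mul_apply]
      simp only [hEfull, Matrix.of_apply, Fin.cases_zero, mul_ite, mul_one, mul_zero,
        Finset.sum_ite_eq', Finset.mem_univ, if_true]
      exact hb₁col j
    have hB''succ : ∀ j k, B'' j (Fin.succ k) = α * B' j (Fin.succ k) - β k * b₁ j := by
      intro j k
      rw [hB'', Matrix.mul_apply]
      simp only [hEfull, Matrix.of_apply, Fin.cases_succ]
      rw [Fin.sum_univ_succ]
      simp only [if_pos rfl, Fin.succ_ne_zero, if_false, Fin.succ_inj, mul_ite, mul_zero,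
        Finset.sum_ite_eq', Finset.mem_univ, if_true]
      rw [hb₁col j]; ring
    have hdetE : Efull.det = α ^ r := by
      have hcond : ∀ i : Fin r, Efull i.succ 0 = 0 := by
        intro i; simp [hEfull, Fin.succ_ne_zero]
      rw [det_bordered Efull hcond]
      have h00 : Efull 0 0 = (1:ℤ) := by simp [hEfull]
      have hsub : Efull.submatrix Fin.succ Fin.succ
          = Matrix.diagonal (fun _ : Fin r => α) := by
        ext i' l'
        by_cases h : i' = l' <;>
          simp [Matrix.submatrix_apply, hEfull, Fin.succ_ne_zero, Fin.succ_inj, h,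
            Matrix.diagonal_apply]
      rw [h00, hsub, Matrix.det_diagonal, one_mul, Finset.prod_const, Finset.card_univ,
        Fintype.card_fin]
    set C : Matrix (Fin d) (Fin r) ℤ := Matrix.of fun j k => B'' j (Fin.succ k) with hC
    have hgram00 : gram N B'' 0 0 = α := by
      show inn N (fun j => B'' j 0) (fun j => B'' j 0) = α
      have h1 : (fun j => B'' j 0) = b₁ := funext hB''0
      rw [h1, hα]
      rfl
    have hgramsucc0 : ∀ k : Fin r, gram N B'' (Fin.succ k) 0 = 0 := by
      intro k
      show inn N (fun j => B'' j (Fin.succ k)) (fun j => B'' j 0) = 0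
      have h1 : (fun j => B'' j 0) = b₁ := funext hB''0
      have h2 : (fun j => B'' j (Fin.succ k))
          = fun j => α * B' j (Fin.succ k) - β k * b₁ j := funext (fun j => hB''succ j k)
      rw [h1, h2, inn_amul_sub_mul]
      have h3 : inn N (fun j => B' j (Fin.succ k)) b₁ = β k := rfl
      have h4 : inn N b₁ b₁ = α := rfl
      rw [h3, h4]; ring
    have hsubgram : (gram N B'').submatrix Fin.succ Fin.succ = gram N C := by
      ext k l
      rfl
    have hdetB''C : (gram N B'').det = α * (gram N C).det := by
      rw [det_bordered (gram N B'') hgramsucc0, hgram00, hsubgram]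
    have hΔB' : (gram N B').det = (gram N B).det := by
      rw [hB', det_gram_mul, sq_det_unit hUinvUnit, one_mul]
    have hdetchain : (gram N B'').det = α^(2*r) * (gram N B).det := by
      rw [hB'', det_gram_mul, hdetE, hΔB', ← pow_mul]
      ring_nf
    have hkey : α * (gram N C).det = α^(2*r) * (gram N B).det := by
      rw [← hdetB''C, hdetchain]
    -- C is independent
    have hCindep : ∀ z : Fin r → ℤ, C.mulVec z = 0 → z = 0 := by
      intro z hz
      set w : Fin (r+1) → ℤ := Fin.cases (-(∑ k, z k * β k)) (fun k => α * z k) with hw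
      have hBw : B'.mulVec w = C.mulVec z := by
        ext j
        simp only [Matrix.mulVec, dotProduct]
        rw [Fin.sum_univ_succ]
        simp only [hw, Fin.cases_zero, Fin.cases_succ, hC, Matrix.of_apply]
        have h5 : ∀ k : Fin r, B'' j (Fin.succ k) * z k
            = (α * B' j (Fin.succ k) - β k * b₁ j) * z k := fun k => by rw [hB''succ]
        rw [Finset.sum_congr rfl (fun k _ => h5 k), hb₁col j]
        rw [show (∑ k, (α * B' j (Fin.succ k) - β k * b₁ j) * z k)
            = (∑ k, B' j (Fin.succ k) * (α * z k)) - ∑ k, b₁ j * (z k * β k) by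
          rw [← Finset.sum_sub_distrib]
          exact Finset.sum_congr rfl fun k _ => by ring]
        rw [show (∑ k, b₁ j * (z k * β k)) = b₁ j * ∑ k, z k * β k from
          (Finset.mul_sum _ _ _).symm]
        ring
      rw [hz] at hBw
      have hw0 := hB'indep w hBw
      funext k
      have h6 := congrFun hw0 (Fin.succ k)
      simp only [hw, Fin.cases_succ, Pi.zero_apply] at h6
      have : α ≠ 0 := ne_of_gt hαpos
      exact (mul_eq_zero.mp h6).resolve_left this
    obtain ⟨hdetCnn, T', hT', hboundC⟩ := IH C hCindep
    have hΔnn : 0 ≤ (gram N B).det := by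
      have h1 : 0 ≤ α * (gram N C).det := mul_nonneg hαpos.le hdetCnn
      rw [hkey] at h1
      by_contra h
      push_neg at h
      have h2 : (0:ℤ) < α^(2*r) := pow_pos hαpos _
      nlinarith
    refine ⟨hΔnn, ?_⟩
    -- lifted reduced basis
    set y : Fin r → Fin d → ℤ := fun k j => ∑ l, T' l k * B' j (Fin.succ l) with hy
    set γ : Fin r → ℤ := fun k => inn N (y k) b₁ with hγ
    set c : Fin r → Fin d → ℤ := fun k j => (C * T') j k with hc
    have hγeq : ∀ k, γ k = ∑ l, T' l k * β l := by
      intro k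
      rw [hγ]
      exact inn_sum_left N (fun l => T' l k) (fun l j => B' j (Fin.succ l)) b₁
    have hceq : ∀ k, c k = fun j => α * y k j - γ k * b₁ j := by
      intro k
      funext j
      simp only [hc, Matrix.mul_apply, hC, Matrix.of_apply]
      rw [Finset.sum_congr rfl (fun l _ => by rw [hB''succ j l])]
      rw [show (∑ l, (α * B' j (Fin.succ l) - β l * b₁ j) * T' l k)
          = α * (∑ l, T' l k * B' j (Fin.succ l)) - (∑ l, T' l k * β l) * b₁ j by
        rw [Finset.mul_sum, Finset.sum_mul, ← Finset.sum_sub_distrib]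
        exact Finset.sum_congr rfl fun l _ => by ring]
      rw [← hγeq k]
    have hrho : ∀ k, ∃ t : ℤ, 2 * |γ k - t * α| ≤ α := fun k => near_div (γ k) α hαpos
    choose ρ hρ using hrho
    set s : Fin r → ℤ := fun k => γ k - ρ k * α with hsdef
    set b : Fin r → Fin d → ℤ := fun k j => y k j - ρ k * b₁ j with hbdef
    have hsinn : ∀ k, inn N (b k) b₁ = s k := by
      intro k
      have h1 : b k = fun j => y k j - ρ k * b₁ j := rfl
      rw [h1, inn_sub_mul]
      have h2 : inn N (y k) b₁ = γ k := rfl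
      have h3 : inn N b₁ b₁ = α := rfl
      rw [h2, h3, hsdef]
    have hcb : ∀ k, c k = fun j => α * b k j - s k * b₁ j := by
      intro k
      rw [hceq k]
      funext j
      simp only [hbdef, hsdef]
      ring
    have hqc : ∀ k, q N (c k) = α^2 * q N (b k) - α * (s k)^2 := by
      intro k
      rw [hcb k, q_sub_smul, hsinn k]
      have h3 : q N b₁ = α := rfl
      rw [h3]; ring
    have hCT'indep := indep_mul C T' hCindep hT'
    have hcne : ∀ k, c k ≠ 0 := by
      intro k h
      have h1 : (C * T').mulVec (Pi.single k 1) = 0 := by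
        ext j
        rw [Matrix.mulVec_single]
        have := congrFun h j
        simp only [hc] at this
        simpa using this
      have h2 := hCT'indep _ h1
      have h3 := congrFun h2 k
      simp at h3
    have hbne : ∀ k, b k ≠ 0 := by
      intro k h
      apply hcne k
      have hs0 : s k = 0 := by
        rw [← hsinn k, h, inn_zero_left]
      rw [hcb k, hs0, h]
      funext j
      simp
    have hmemb : ∀ k, B.mulVec (U⁻¹.mulVec (Fin.cases (-(ρ k)) (fun l => T' l k))) = b k := by
      intro k
      rw [Matrix.mulVec_mulVec, ← hB']
      ext j
      simp only [Matrix.mulVec, dotProduct]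
      rw [Fin.sum_univ_succ]
      simp only [Fin.cases_zero, Fin.cases_succ]
      rw [hb₁col j]
      simp only [hbdef, hy]
      rw [show (∑ l, B' j (Fin.succ l) * T' l k) = ∑ l, T' l k * B' j (Fin.succ l) from
        Finset.sum_congr rfl fun l _ => mul_comm _ _]
      ring
    have hαleb : ∀ k, α ≤ q N (b k) := by
      intro k
      have h1 := hmin (U⁻¹.mulVec (Fin.cases (-(ρ k)) (fun l => T' l k))) (by
        rw [hmemb k]; exact hbne k)
      rwa [hmemb k] at h1
    have hkey2 : ∀ k, 3 * α^2 * q N (b k) ≤ 4 * q N (c k) := by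
      intro k
      have h1 := hqc k
      have h2' : 2 * |s k| ≤ α := hρ k
      have h4s : 4 * (s k)^2 ≤ α^2 := by nlinarith [abs_nonneg (s k), sq_abs (s k)]
      have h5 := hαleb k
      nlinarith [q_nonneg N (b k)]
    -- assemble final transform
    set E₂ : Matrix (Fin (r+1)) (Fin (r+1)) ℤ :=
      Matrix.of fun i l => Fin.cases (if i = 0 then (1:ℤ) else 0)
        (fun l' => Fin.cases (-(ρ l')) (fun i' => T' i' l') i) l with hE₂
    set T : Matrix (Fin (r+1)) (Fin (r+1)) ℤ := U⁻¹ * E₂ with hT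
    have hdetE₂ : E₂.det = T'.det := by
      have hcond : ∀ i : Fin r, E₂ i.succ 0 = 0 := by
        intro i; simp [hE₂, Fin.succ_ne_zero]
      rw [det_bordered E₂ hcond]
      have h00 : E₂ 0 0 = (1:ℤ) := by simp [hE₂]
      have hsub : E₂.submatrix Fin.succ Fin.succ = T' := by
        ext i' l'
        simp [hE₂, Matrix.submatrix_apply]
      rw [h00, hsub, one_mul]
    have hTunit : IsUnit T.det := by
      rw [hT, Matrix.det_mul, hdetE₂]
      exact hUinvUnit.mul hT'
    have hBT : B * T = B' * E₂ := by rw [hT, hB', Matrix.mul_assoc]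
    have hBT0 : (fun j => (B * T) j 0) = b₁ := by
      funext j
      rw [hBT, Matrix.mul_apply]
      simp only [hE₂, Matrix.of_apply, Fin.cases_zero, mul_ite, mul_one, mul_zero,
        Finset.sum_ite_eq', Finset.mem_univ, if_true]
      exact hb₁col j
    have hBTsucc : ∀ k, (fun j => (B * T) j (Fin.succ k)) = b k := by
      intro k
      funext j
      rw [hBT, Matrix.mul_apply]
      simp only [hE₂, Matrix.of_apply, Fin.cases_succ]
      rw [Fin.sum_univ_succ]
      simp only [Fin.cases_zero, Fin.cases_succ]
      rw [hb₁col j]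
      simp only [hbdef, hy]
      rw [show (∑ l, B' j (Fin.succ l) * T' l k) = ∑ l, T' l k * B' j (Fin.succ l) from
        Finset.sum_congr rfl fun l _ => mul_comm _ _]
      ring
    refine ⟨T, hTunit, ?_⟩
    have hprodsplit : ∏ k : Fin (r+1), q N (fun j => (B * T) j k)
        = α * ∏ k : Fin r, q N (b k) := by
      rw [Fin.prod_univ_succ, hBT0]
      congr 1
      exact Finset.prod_congr rfl fun k _ => by rw [hBTsucc k]
    rw [hprodsplit]
    have hPnn : 0 ≤ ∏ k : Fin r, q N (b k) :=
      Finset.prod_nonneg fun k _ => q_nonneg N (b k)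
    have hprod1 : ∏ k : Fin r, (3 * α^2 * q N (b k)) ≤ ∏ k : Fin r, (4 * q N (c k)) := by
      apply Finset.prod_le_prod
      · intro k _
        have := q_nonneg N (b k)
        positivity
      · intro k _
        exact hkey2 k
    have hL : ∏ k : Fin r, (3 * α^2 * q N (b k))
        = (3*α^2)^r * ∏ k : Fin r, q N (b k) := by
      rw [Finset.prod_mul_distrib, Finset.prod_const, Finset.card_univ, Fintype.card_fin]
    have hR : ∏ k : Fin r, (4 * q N (c k)) = 4^r * ∏ k : Fin r, q N (c k) := by
      rw [Finset.prod_mul_distrib, Finset.prod_const, Finset.card_univ, Fintype.card_fin]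
    have hboundC' : ∏ k : Fin r, q N (c k) ≤ 4^(r*r) * (gram N C).det := hboundC
    have h10 : (3*α^2)^r * ∏ k : Fin r, q N (b k)
        ≤ 4^r * (4^(r*r) * (gram N C).det) := by
      rw [← hL]
      calc ∏ k : Fin r, (3 * α^2 * q N (b k)) ≤ ∏ k : Fin r, (4 * q N (c k)) := hprod1
        _ = 4^r * ∏ k : Fin r, q N (c k) := hR
        _ ≤ 4^r * (4^(r*r) * (gram N C).det) := by
            apply mul_le_mul_of_nonneg_left hboundC'
            positivity
    have h11 : α * ((3*α^2)^r * ∏ k : Fin r, q N (b k))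
        ≤ α * (4^r * (4^(r*r) * (gram N C).det)) :=
      mul_le_mul_of_nonneg_left h10 hαpos.le
    have h12 : α * (4^r * (4^(r*r) * (gram N C).det))
        = 4^(r*r+r) * (α^(2*r) * (gram N B).det) := by
      rw [show α * (4^r * (4^(r*r) * (gram N C).det)) = 4^(r*r+r) * (α * (gram N C).det) by
        rw [pow_add]; ring]
      rw [hkey]
    have h13 : α * ((3*α^2)^r * ∏ k : Fin r, q N (b k))
        = α^(2*r) * (3^r * (α * ∏ k : Fin r, q N (b k))) := by
      rw [mul_pow, ← pow_mul]
      ring_nf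
    have h14 : α^(2*r) * (3^r * (α * ∏ k : Fin r, q N (b k)))
        ≤ α^(2*r) * (4^(r*r+r) * (gram N B).det) := by
      rw [← h13]
      calc α * ((3*α^2)^r * ∏ k : Fin r, q N (b k))
          ≤ α * (4^r * (4^(r*r) * (gram N C).det)) := h11
        _ = 4^(r*r+r) * (α^(2*r) * (gram N B).det) := h12
        _ = α^(2*r) * (4^(r*r+r) * (gram N B).det) := by ring
    have h15 : 3^r * (α * ∏ k : Fin r, q N (b k)) ≤ 4^(r*r+r) * (gram N B).det :=
      le_of_mul_le_mul_left h14 (pow_pos hαpos _)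
    have h16 : α * ∏ k : Fin r, q N (b k) ≤ 3^r * (α * ∏ k : Fin r, q N (b k)) := by
      apply le_mul_of_one_le_left
      · exact mul_nonneg hαpos.le hPnn
      · exact one_le_pow₀ (by norm_num : (1:ℤ) ≤ 3)
    have h17 : (4:ℤ)^(r*r+r) * (gram N B).det ≤ 4^((r+1)*(r+1)) * (gram N B).det := by
      apply mul_le_mul_of_nonneg_right _ hΔnn
      apply pow_le_pow_right₀ (by norm_num : (1:ℤ) ≤ 4)
      nlinarith
    exact le_trans (le_trans h16 h15) h17

lemma det_bordered_row {r : ℕ} (M : Matrix (Fin (r+1)) (Fin (r+1)) ℤ)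
    (h0 : ∀ j : Fin r, M 0 j.succ = 0) :
    M.det = M 0 0 * (M.submatrix Fin.succ Fin.succ).det := by
  rw [Matrix.det_succ_row_zero, Fin.sum_univ_succ]
  simp [h0, Fin.succAbove_zero]

lemma sum_change {G : Type} [AddCommGroup G] {p : ℕ} (P Q : Matrix (Fin p) (Fin p) ℤ)
    (hPQ : P * Q = 1) (a : Fin p → ℤ) (v : Fin p → G) :
    ∑ j, a j • v j = ∑ l, (Q.mulVec a l) • (∑ j, P j l • v j) := by
  symm
  calc ∑ l, (Q.mulVec a l) • (∑ j, P j l • v j)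
      = ∑ l, ∑ j, (P j l * Q.mulVec a l) • v j := by
        refine Finset.sum_congr rfl fun l _ => ?_
        rw [Finset.smul_sum]
        refine Finset.sum_congr rfl fun j _ => ?_
        rw [smul_smul, mul_comm]
    _ = ∑ j, ∑ l, (P j l * Q.mulVec a l) • v j := Finset.sum_comm
    _ = ∑ j, (∑ l, P j l * Q.mulVec a l) • v j := by
        refine Finset.sum_congr rfl fun j _ => ?_
        rw [← Finset.sum_smul]
    _ = ∑ j, a j • v j := by
        refine Finset.sum_congr rfl fun j _ => ?_
        congr 1
        have h1 : (P.mulVec (Q.mulVec a)) j = ∑ l, P j l * Q.mulVec a l := rfl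
        rw [← h1, Matrix.mulVec_mulVec, hPQ, Matrix.one_mulVec]

set_option maxHeartbeats 2000000 in
/-- covolume formula for the kernel sublattice of a primitive vector. -/
lemma covol {n : ℕ} (N : Fin (n+1) → ℕ) (hN : ∀ j, 0 < N j) (m : Fin (n+1) → ℤ)
    (U : Matrix (Fin (n+1)) (Fin (n+1)) ℤ) (hU : IsUnit U.det)
    (hUm : U.mulVec m = Pi.single 0 1)
    (R : Matrix (Fin (n+1)) (Fin n) ℤ) (hR : ∀ j k, R j k = U (Fin.succ k) j)
    (hS : 0 < ∑ j, (m j)^2 * ∏ k ∈ Finset.univ.erase j, ((N k : ℤ))^2) :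
    (gram N R).det = ∑ j, (m j)^2 * ∏ k ∈ Finset.univ.erase j, ((N k : ℤ))^2 := by
  set S : ℤ := ∑ j, (m j)^2 * ∏ k ∈ Finset.univ.erase j, ((N k : ℤ))^2 with hSdef
  set X : Matrix (Fin (n+1)) (Fin (n+1)) ℤ := Uᵀ with hX
  have hXunit : IsUnit X.det := by rw [hX, Matrix.det_transpose]; exact hU
  have hXinv1 : X⁻¹ * X = 1 := Matrix.nonsing_inv_mul X hXunit
  have hXinvUnit : IsUnit (X⁻¹).det := by
    apply IsUnit.of_mul_eq_one X.det
    rw [← Matrix.det_mul, hXinv1, Matrix.det_one]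
  have hUinv1 : U⁻¹ * U = 1 := Matrix.nonsing_inv_mul U hU
  have hUinvcol : ∀ t, U⁻¹ t 0 = m t := by
    intro t
    have h1 : U⁻¹.mulVec (U.mulVec m) = m := by
      rw [Matrix.mulVec_mulVec, hUinv1, Matrix.one_mulVec]
    rw [hUm] at h1
    have h2 := congrFun h1 t
    simpa [Matrix.mulVec_single] using h2
  have hXinvT : X⁻¹ = (U⁻¹)ᵀ := by
    rw [hX, Matrix.transpose_nonsing_inv]
  set ν : Fin (n+1) → ℤ := fun j => m j * ∏ k ∈ Finset.univ.erase j, ((N k : ℤ))^2 with hν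
  have hprodN2pos : (0:ℤ) < ∏ j, ((N j : ℤ))^2 := by
    apply Finset.prod_pos
    intro j _
    have := hN j
    positivity
  have hinnν : ∀ x : Fin (n+1) → ℤ, inn N ν x = (∏ j, ((N j : ℤ))^2) * ∑ j, m j * x j := by
    intro x
    unfold inn
    rw [Finset.mul_sum]
    refine Finset.sum_congr rfl fun j _ => ?_
    have h1 : ((N j : ℤ))^2 * ∏ k ∈ Finset.univ.erase j, ((N k : ℤ))^2
        = ∏ k, ((N k : ℤ))^2 :=
      Finset.mul_prod_erase Finset.univ (fun k => ((N k : ℤ))^2) (Finset.mem_univ j)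
    simp only [hν]
    rw [← h1]
    ring
  have hmR : ∀ k : Fin n, (∑ j, m j * R j k) = 0 := by
    intro k
    have h1 : (U.mulVec m) (Fin.succ k) = 0 := by
      rw [hUm, Pi.single_eq_of_ne (Fin.succ_ne_zero k)]
    have h2 : (U.mulVec m) (Fin.succ k) = ∑ j, U (Fin.succ k) j * m j := rfl
    rw [h2] at h1
    rw [← h1]
    refine Finset.sum_congr rfl fun j _ => ?_
    rw [hR]; ring
  have hmν : (∑ j, m j * ν j) = S := by
    rw [hSdef]
    refine Finset.sum_congr rfl fun j _ => ?_
    simp only [hν]; ring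
  set Y : Matrix (Fin (n+1)) (Fin (n+1)) ℤ :=
    Matrix.of fun j l => Fin.cases (ν j) (fun k => R j k) l with hY
  have hY0 : ∀ j, Y j 0 = ν j := fun j => rfl
  have hYsucc : ∀ j k, Y j (Fin.succ k) = R j k := by
    intro j k
    simp [hY]
  -- gram N Y is block diagonal
  have g00 : gram N Y 0 0 = (∏ j, ((N j : ℤ))^2) * S := by
    show inn N (fun j => Y j 0) (fun j => Y j 0) = _
    have h1 : (fun j => Y j 0) = ν := funext hY0
    rw [h1, hinnν, hmν]
  have gsucc0 : ∀ k : Fin n, gram N Y (Fin.succ k) 0 = 0 := by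
    intro k
    show inn N (fun j => Y j (Fin.succ k)) (fun j => Y j 0) = 0
    have h1 : (fun j => Y j 0) = ν := funext hY0
    have h2 : (fun j => Y j (Fin.succ k)) = fun j => R j k := funext (fun j => hYsucc j k)
    rw [h1, h2, inn_comm, hinnν, hmR k, mul_zero]
  have hsubY : (gram N Y).submatrix Fin.succ Fin.succ = gram N R := by
    ext k l
    show inn N (fun j => Y j (Fin.succ k)) (fun j => Y j (Fin.succ l)) = _
    have h2 : (fun j => Y j (Fin.succ k)) = fun j => R j k := funext (fun j => hYsucc j k)
    have h3 : (fun j => Y j (Fin.succ l)) = fun j => R j l := funext (fun j => hYsucc j l)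
    rw [h2, h3]
    rfl
  have hdetgramY : (gram N Y).det = ((∏ j, ((N j : ℤ))^2) * S) * (gram N R).det := by
    rw [det_bordered (gram N Y) gsucc0, g00, hsubY]
  -- second computation of the same determinant
  have hW00 : (X⁻¹ * Y) 0 0 = S := by
    rw [Matrix.mul_apply]
    rw [← hmν]
    refine Finset.sum_congr rfl fun t _ => ?_
    rw [hXinvT]
    show (U⁻¹)ᵀ 0 t * Y t 0 = m t * ν t
    rw [Matrix.transpose_apply, hUinvcol t, hY0]
  have hWsucc : ∀ (i : Fin (n+1)) (l : Fin n),
      (X⁻¹ * Y) i (Fin.succ l) = (1 : Matrix (Fin (n+1)) (Fin (n+1)) ℤ) i (Fin.succ l) := by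
    intro i l
    rw [← hXinv1, Matrix.mul_apply, Matrix.mul_apply]
    refine Finset.sum_congr rfl fun t _ => ?_
    congr 1
    rw [hYsucc, hR, hX]
    rfl
  have hdetW : (X⁻¹ * Y).det = S := by
    have h0 : ∀ l : Fin n, (X⁻¹ * Y) 0 (Fin.succ l) = 0 := by
      intro l
      rw [hWsucc 0 l, Matrix.one_apply_ne (Ne.symm (Fin.succ_ne_zero l))]
    rw [det_bordered_row (X⁻¹ * Y) h0, hW00]
    have hsub1 : (X⁻¹ * Y).submatrix Fin.succ Fin.succ
        = (1 : Matrix (Fin n) (Fin n) ℤ) := by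
      ext i l
      rw [Matrix.submatrix_apply, hWsucc]
      by_cases h : i = l
      · subst h; simp
      · rw [Matrix.one_apply_ne (by simpa [Fin.succ_inj] using h),
          Matrix.one_apply_ne h]
    rw [hsub1, Matrix.det_one, mul_one]
  have hdetY2 : Y.det ^ 2 = S ^ 2 := by
    have h1 : (X⁻¹).det * Y.det = S := by
      rw [← Matrix.det_mul]; exact hdetW
    have h2 := sq_det_unit hXinvUnit
    nlinarith [h1, h2]
  have hgramY2 : (gram N Y).det = Y.det ^ 2 * ∏ j, ((N j : ℤ))^2 := by
    rw [gram_eq, Matrix.det_mul, Matrix.det_mul, Matrix.det_transpose, Matrix.det_diagonal]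
    ring
  -- combine
  have hfinal : ((∏ j, ((N j : ℤ))^2) * S) * (gram N R).det = ((∏ j, ((N j : ℤ))^2) * S) * S := by
    rw [← hdetgramY, hgramY2, hdetY2]
    ring
  exact mul_left_cancel₀ (by positivity) hfinal


def Fn (n : ℕ) : ℕ := 3^n * 2^(n*n+1) * (n+1)^(n+1)

lemma keypow {n : ℕ} (hn : 1 ≤ n) :
    n ^ (100 * n^3) * Fn n ≤ (n+1) ^ (100 * (n+1)^3) := by
  have h3 : (3:ℕ) ≤ (n+1)^2 := by nlinarith
  have h2 : (2:ℕ) ≤ (n+1)^2 := by nlinarith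
  have hF : Fn n ≤ (n+1) ^ (2*n^2 + 3*n + 3) := by
    have b1 : (3:ℕ)^n ≤ ((n+1)^2)^n := Nat.pow_le_pow_left h3 n
    have b2 : (2:ℕ)^(n*n+1) ≤ ((n+1)^2)^(n*n+1) := Nat.pow_le_pow_left h2 (n*n+1)
    have hh : Fn n ≤ ((n+1)^2)^n * ((n+1)^2)^(n*n+1) * (n+1)^(n+1) := by
      unfold Fn
      exact Nat.mul_le_mul (Nat.mul_le_mul b1 b2) (le_refl _)
    calc Fn n ≤ ((n+1)^2)^n * ((n+1)^2)^(n*n+1) * (n+1)^(n+1) := hh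
      _ = (n+1) ^ (2*n^2 + 3*n + 3) := by
          rw [← pow_mul, ← pow_mul, ← pow_add, ← pow_add]
          congr 1
          ring
  have hbase : n ^ (100 * n^3) ≤ (n+1) ^ (100 * n^3) :=
    Nat.pow_le_pow_left (Nat.le_succ n) _
  calc n ^ (100 * n^3) * Fn n ≤ (n+1) ^ (100 * n^3) * (n+1) ^ (2*n^2 + 3*n + 3) :=
        Nat.mul_le_mul hbase hF
    _ = (n+1) ^ (100 * n^3 + (2*n^2 + 3*n + 3)) := (pow_add _ _ _).symm
    _ ≤ (n+1) ^ (100 * (n+1)^3) := by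
        apply Nat.pow_le_pow_right (Nat.succ_le_succ (Nat.zero_le n))
        nlinarith

lemma transfer {n : ℕ} (PM PN : ℕ) (hPN : 0 < PN) (hM : PM ≤ Fn n * PN)
    (hPM0 : n = 0 → PM = 1) :
    n ^ (100 * n^3) * PM ≤ (n+1) ^ (100 * (n+1)^3) * PN := by
  rcases Nat.eq_zero_or_pos n with h0 | hpos
  · subst h0
    rw [hPM0 rfl]
    simp only [pow_succ, pow_zero, one_pow, one_mul, mul_one]
    omega
  · calc n ^ (100 * n^3) * PM ≤ n ^ (100 * n^3) * (Fn n * PN) :=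
        Nat.mul_le_mul_left _ hM
      _ = (n ^ (100 * n^3) * Fn n) * PN := by ring
      _ ≤ (n+1) ^ (100 * (n+1)^3) * PN := Nat.mul_le_mul_right _ (keypow hpos)

lemma smul_collapse {G : Type} [AddCommGroup G] {p q' : ℕ} (c : Fin q' → ℤ)
    (D : Fin p → Fin q' → ℤ) (v : Fin p → G) :
    ∑ l, c l • (∑ j, D j l • v j) = ∑ j, (∑ l, D j l * c l) • v j := by
  calc ∑ l, c l • ∑ j, D j l • v j = ∑ l, ∑ j, (D j l * c l) • v j := by
        refine Finset.sum_congr rfl fun l _ => ?_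
        rw [Finset.smul_sum]
        refine Finset.sum_congr rfl fun j _ => ?_
        rw [smul_smul, mul_comm]
    _ = ∑ j, ∑ l, (D j l * c l) • v j := Finset.sum_comm
    _ = ∑ j, (∑ l, D j l * c l) • v j := by
        refine Finset.sum_congr rfl fun j _ => ?_
        rw [← Finset.sum_smul]

set_option maxHeartbeats 4000000 in
theorem aux (G : Type) [AddCommGroup G] :
    ∀ (dd : ℕ) (v : Fin dd → G) (N : Fin dd → ℕ), (∀ j, 0 < N j) →
      (∀ g : G, g ≠ 0 → addOrderOf g = 0 ∨
          dd ^ (100 * dd ^ 3) * ∏ j, (2 * N j + 1) ≤ addOrderOf g) →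
      ∃ (d' : ℕ) (w : Fin d' → G) (M : Fin d' → ℕ),
        d' ≤ dd ∧ (∀ j, 0 < M j) ∧
        (∀ m m' : Fin d' → ℤ, (∀ j, |m j| ≤ M j) → (∀ j, |m' j| ≤ M j) →
          ∑ j, m j • w j = ∑ j, m' j • w j → m = m') ∧
        {x : G | ∃ m : Fin dd → ℤ, (∀ j, |m j| ≤ N j) ∧ x = ∑ j, m j • v j} ⊆
          {x : G | ∃ m : Fin d' → ℤ, (∀ j, |m j| ≤ M j) ∧ x = ∑ j, m j • w j} ∧
        ∏ j, (2 * M j + 1) ≤ dd ^ (100 * dd ^ 3) * ∏ j, (2 * N j + 1) := by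
  intro dd
  induction dd with
  | zero =>
    intro v N hN hord
    refine ⟨0, v, N, le_refl 0, hN, ?_, subset_rfl, ?_⟩
    · intro m m' _ _ _
      exact Subsingleton.elim m m'
    · norm_num
  | succ n IH =>
    intro v N hN hord
    have hPNpos : 0 < ∏ j, (2 * N j + 1) := Finset.prod_pos fun j _ => by omega
    by_cases hproper : ∀ m m' : Fin (n+1) → ℤ, (∀ j, |m j| ≤ (N j : ℤ)) →
        (∀ j, |m' j| ≤ (N j : ℤ)) → ∑ j, m j • v j = ∑ j, m' j • v j → m = m'
    · refine ⟨n+1, v, N, le_refl _, hN, hproper, subset_rfl, ?_⟩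
      have h1 : 0 < (n+1) ^ (100*(n+1)^3) := Nat.pow_pos (Nat.succ_pos n)
      exact Nat.le_mul_of_pos_left _ h1
    · push_neg at hproper
      obtain ⟨m₁, m₂, hm₁b, hm₂b, hsum, hne⟩ := hproper
      set mt : Fin (n+1) → ℤ := fun j => m₁ j - m₂ j with hmt
      obtain ⟨j0, hj0⟩ : ∃ j, mt j ≠ 0 := by
        by_contra h
        push_neg at h
        apply hne
        funext j
        have := h j
        simp only [hmt] at this
        omega
      have hmtsum : ∑ j, mt j • v j = 0 := by
        simp only [hmt, sub_smul]
        rw [Finset.sum_sub_distrib, hsum, sub_self]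
      have hmtb : ∀ j, |mt j| ≤ 2 * (N j : ℤ) := by
        intro j
        have h1 := hm₁b j
        have h2 := hm₂b j
        simp only [hmt]
        rw [abs_le] at *
        omega
      set g : ℤ := Finset.univ.gcd mt with hg
      have hgdvd : ∀ j, g ∣ mt j := fun j => Finset.gcd_dvd (Finset.mem_univ j)
      have hg0 : g ≠ 0 := by
        intro h
        apply hj0
        have := Finset.gcd_eq_zero_iff.mp (hg ▸ h)
        exact this j0 (Finset.mem_univ j0)
      set m : Fin (n+1) → ℤ := fun j => mt j / g with hm
      have hmteq : ∀ j, mt j = g * m j := by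
        intro j
        simp only [hm]
        rw [Int.mul_ediv_cancel' (hgdvd j)]
      have hm0 : m ≠ 0 := by
        intro h
        apply hj0
        rw [hmteq j0, h]
        simp
      have hmb : ∀ j, |m j| ≤ 2 * (N j : ℤ) := by
        intro j
        have h1 := hmtb j
        have h2 : |mt j| = |g| * |m j| := by rw [hmteq j, abs_mul]
        have h3 : 1 ≤ |g| := Int.one_le_abs hg0
        nlinarith [abs_nonneg (m j)]
      -- the combination Σ m_j • v_j is torsion of order dividing |g|, hence zero
      have hbig1 : 2 * N j0 + 1 ≤ ∏ j, (2 * N j + 1) :=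
        Finset.single_le_prod' (f := fun j : Fin (n+1) => 2 * N j + 1)
          (fun j _ => Nat.le_add_left 1 (2 * N j)) (Finset.mem_univ j0)
      have hgle : g.natAbs ≤ 2 * N j0 := by
        have h1 : g.natAbs ∣ (mt j0).natAbs := Int.natAbs_dvd_natAbs.mpr (hgdvd j0)
        have h2 : 0 < (mt j0).natAbs := Int.natAbs_pos.mpr hj0
        have h3 := Nat.le_of_dvd h2 h1
        have h4 := hmtb j0
        have h5 : (mt j0).natAbs ≤ 2 * N j0 := by
          rcases abs_cases (mt j0) with ⟨he, _⟩ | ⟨he, _⟩ <;> omega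
        omega
      have hφm0 : ∑ j, m j • v j = 0 := by
        by_contra hxne
        set x : G := ∑ j, m j • v j with hx
        have hgx : g • x = 0 := by
          rw [hx, Finset.smul_sum, ← hmtsum]
          refine Finset.sum_congr rfl fun j _ => ?_
          rw [smul_smul, ← hmteq j]
        have hnx : (g.natAbs : ℕ) • x = 0 := by
          have h1 : ((g.natAbs : ℤ)) • x = 0 := by
            rcases Int.natAbs_eq g with h | h
            · rw [← h]; exact hgx
            · rw [show ((g.natAbs : ℤ)) = -g by omega, neg_smul, hgx, neg_zero]
          rwa [natCast_zsmul] at h1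
        have hfin : IsOfFinAddOrder x :=
          isOfFinAddOrder_iff_nsmul_eq_zero.mpr ⟨g.natAbs, Int.natAbs_pos.mpr hg0, hnx⟩
        have hordle : addOrderOf x ≤ g.natAbs :=
          Nat.le_of_dvd (Int.natAbs_pos.mpr hg0) (addOrderOf_dvd_of_nsmul_eq_zero hnx)
        have hordpos : 0 < addOrderOf x := hfin.addOrderOf_pos
        rcases hord x hxne with h | h
        · omega
        · have hbig2 : ∏ j, (2 * N j + 1) ≤ (n+1) ^ (100 * (n+1) ^ 3) * ∏ j, (2 * N j + 1) :=
            Nat.le_mul_of_pos_left _ (Nat.pow_pos (Nat.succ_pos n))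
          omega
      -- primitivity of m
      have hmprim : ∀ e : ℤ, 0 < e → (∀ i, e ∣ m i) → e = 1 := by
        intro e he hdvd
        have h1 : ∀ j, g * e ∣ mt j := by
          intro j
          rw [hmteq j]
          exact mul_dvd_mul_left g (hdvd j)
        have h2 : g * e ∣ g := Finset.dvd_gcd fun j _ => h1 j
        have h3 : e ∣ 1 := by
          have h4 : g * e ∣ g * 1 := by rwa [mul_one]
          exact (mul_dvd_mul_iff_left hg0).mp h4
        rcases Int.isUnit_iff.mp (isUnit_of_dvd_one h3) with h | h
        · exact h
        · omega
      obtain ⟨U, hU, hUm⟩ := euclid_one m hm0 hmprim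
      have hUinv1 : U⁻¹ * U = 1 := Matrix.nonsing_inv_mul U hU
      have hUinv2 : U * U⁻¹ = 1 := Matrix.mul_nonsing_inv U hU
      have hUcol0 : ∀ t, U⁻¹ t 0 = m t := by
        intro t
        have h1 : U⁻¹.mulVec (U.mulVec m) = m := by
          rw [Matrix.mulVec_mulVec, hUinv1, Matrix.one_mulVec]
        rw [hUm] at h1
        have h2 := congrFun h1 t
        simpa [Matrix.mulVec_single] using h2
      set R : Matrix (Fin (n+1)) (Fin n) ℤ := Matrix.of fun j k => U (Fin.succ k) j with hR
      have hRindep : ∀ z : Fin n → ℤ, R.mulVec z = 0 → z = 0 := by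
        intro z hz
        set zt : Fin (n+1) → ℤ := Fin.cases 0 z with hzt
        have h1 : Uᵀ.mulVec zt = 0 := by
          ext j
          have h2 := congrFun hz j
          simp only [Matrix.mulVec, dotProduct] at h2 ⊢
          rw [Fin.sum_univ_succ]
          simp only [hzt, Fin.cases_zero, Fin.cases_succ, mul_zero, zero_add,
            Matrix.transpose_apply]
          rw [← h2]
          rfl
        have h3 : zt = 0 := by
          have h4 : IsUnit Uᵀ.det := by rw [Matrix.det_transpose]; exact hU
          have h5 : (Uᵀ)⁻¹.mulVec (Uᵀ.mulVec zt) = zt := by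
            rw [Matrix.mulVec_mulVec, Matrix.nonsing_inv_mul _ h4, Matrix.one_mulVec]
          rw [h1, Matrix.mulVec_zero] at h5
          exact h5.symm
        funext k
        have := congrFun h3 (Fin.succ k)
        simpa [hzt] using this
      set S : ℤ := ∑ j, (m j)^2 * ∏ k ∈ Finset.univ.erase j, ((N k : ℤ))^2 with hS
      have hprodN2pos : ∀ j : Fin (n+1), (0:ℤ) < ∏ k ∈ Finset.univ.erase j, ((N k : ℤ))^2 := by
        intro j
        apply Finset.prod_pos
        intro k _
        have := hN k
        positivity
      obtain ⟨j1, hj1⟩ : ∃ j, m j ≠ 0 := by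
        by_contra h
        push_neg at h
        exact hm0 (funext h)
      have hSpos : 0 < S := by
        rw [hS]
        apply Finset.sum_pos'
        · intro j _
          have := (hprodN2pos j).le
          positivity
        · refine ⟨j1, Finset.mem_univ j1, ?_⟩
          have h1 : (0:ℤ) < (m j1)^2 := by positivity
          exact mul_pos h1 (hprodN2pos j1)
      have hdetR : (gram N R).det = S :=
        covol N hN m U hU hUm R (fun j k => rfl) (hS ▸ hSpos)
      obtain ⟨_, T, hTunit, hqbound⟩ := reduced_basis N hN n R hRindep
      have hS4 : S ≤ 4 * (n+1) * ∏ j, ((N j : ℤ))^2 := by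
        rw [hS]
        calc ∑ j, (m j)^2 * ∏ k ∈ Finset.univ.erase j, ((N k : ℤ))^2
            ≤ ∑ j : Fin (n+1), 4 * ∏ j', ((N j' : ℤ))^2 := by
              apply Finset.sum_le_sum
              intro j _
              have h1 : (m j)^2 ≤ 4 * ((N j : ℤ))^2 := by
                have := hmb j
                have h2 := abs_nonneg (m j)
                nlinarith [sq_abs (m j)]
              calc (m j)^2 * ∏ k ∈ Finset.univ.erase j, ((N k : ℤ))^2
                  ≤ 4 * ((N j : ℤ))^2 * ∏ k ∈ Finset.univ.erase j, ((N k : ℤ))^2 := by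
                    exact mul_le_mul_of_nonneg_right h1 (hprodN2pos j).le
                _ = 4 * ∏ j', ((N j' : ℤ))^2 := by
                    rw [mul_assoc]
                    congr 1
                    exact Finset.mul_prod_erase Finset.univ (fun k => ((N k : ℤ))^2)
                      (Finset.mem_univ j)
        _ = 4 * (n+1) * ∏ j, ((N j : ℤ))^2 := by
            rw [Finset.sum_const, Finset.card_univ, Fintype.card_fin]
            push_cast
            ring
      -- the new generators and box
      set Ti : Matrix (Fin n) (Fin n) ℤ := T⁻¹ with hTi
      have hTT : T * Ti = 1 := Matrix.mul_nonsing_inv T hTunit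
      set w : Fin n → G := fun k => ∑ j, (∑ l, U⁻¹ j (Fin.succ l) * Ti k l) • v j with hw
      set M : Fin n → ℕ := fun k => ∑ j, N j * ((R * T) j k).natAbs with hM
      have hRTindep := indep_mul R T hRindep hTunit
      have hMpos : ∀ k, 0 < M k := by
        intro k
        obtain ⟨j', hj'⟩ : ∃ j, (R * T) j k ≠ 0 := by
          by_contra h
          push_neg at h
          have hcol : (R * T).mulVec (Pi.single k 1) = 0 := by
            ext j
            rw [Matrix.mulVec_single]
            simp [h j]
          have h1 := hRTindep _ hcol
          have h2 := congrFun h1 k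
          simp at h2
        have h1 : 0 < N j' * ((R * T) j' k).natAbs := by
          have h2 := hN j'
          have h3 : 0 < ((R * T) j' k).natAbs := Int.natAbs_pos.mpr hj'
          positivity
        rw [hM]
        exact lt_of_lt_of_le h1 (Finset.single_le_sum
          (f := fun j => N j * ((R * T) j k).natAbs)
          (fun j _ => Nat.zero_le _) (Finset.mem_univ j'))
      -- containment
      have hsubset : {x : G | ∃ a : Fin (n+1) → ℤ, (∀ j, |a j| ≤ (N j : ℤ)) ∧
            x = ∑ j, a j • v j} ⊆
          {x : G | ∃ b : Fin n → ℤ, (∀ k, |b k| ≤ (M k : ℤ)) ∧ x = ∑ k, b k • w k} := by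
        rintro x ⟨a, ha, rfl⟩
        refine ⟨fun k => ∑ j, (R * T) j k * a j, ?_, ?_⟩
        · intro k
          calc |∑ j, (R * T) j k * a j| ≤ ∑ j, |(R * T) j k * a j| :=
              Finset.abs_sum_le_sum_abs _ _
            _ ≤ ∑ j, |(R * T) j k| * (N j : ℤ) := by
                apply Finset.sum_le_sum
                intro j _
                rw [abs_mul]
                exact mul_le_mul_of_nonneg_left (ha j) (abs_nonneg _)
            _ = (M k : ℤ) := by
                rw [hM]
                push_cast [Int.natCast_natAbs]
                refine Finset.sum_congr rfl fun j _ => ?_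
                ring
        · -- the change of generators identity
          have step1 : ∑ j, a j • v j = ∑ l, (U.mulVec a l) • (∑ j, U⁻¹ j l • v j) :=
            sum_change U⁻¹ U hUinv1 a v
          rw [step1, Fin.sum_univ_succ]
          have hzero : (∑ j, U⁻¹ j 0 • v j) = 0 := by
            calc ∑ j, U⁻¹ j 0 • v j = ∑ j, m j • v j :=
                Finset.sum_congr rfl fun j _ => by rw [hUcol0 j]
              _ = 0 := hφm0
          rw [hzero, smul_zero, zero_add]
          have hTT' : (Ti)ᵀ * Tᵀ = 1 := by
            rw [← Matrix.transpose_mul, hTT, Matrix.transpose_one]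
          have step2 := sum_change (Ti)ᵀ Tᵀ hTT'
            (fun k => U.mulVec a (Fin.succ k))
            (fun k => ∑ j, U⁻¹ j (Fin.succ k) • v j)
          rw [step2]
          refine Finset.sum_congr rfl fun k _ => ?_
          congr 1
          · -- coefficients agree
            have e1 : (Tᵀ.mulVec (fun l => U.mulVec a (Fin.succ l))) k
                = ∑ l, T l k * (U.mulVec a (Fin.succ l)) := by
              simp [Matrix.mulVec, dotProduct, Matrix.transpose_apply]
            have e2 : ∀ l, U.mulVec a (Fin.succ l) = ∑ j, R j l * a j := by
              intro l
              simp only [Matrix.mulVec, dotProduct, hR, Matrix.of_apply]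
            rw [e1]
            rw [Finset.sum_congr rfl fun l _ => by rw [e2 l]]
            calc ∑ l, T l k * ∑ j, R j l * a j
                = ∑ l, ∑ j, T l k * (R j l * a j) := by
                  refine Finset.sum_congr rfl fun l _ => ?_
                  rw [Finset.mul_sum]
              _ = ∑ j, ∑ l, T l k * (R j l * a j) := Finset.sum_comm
              _ = ∑ j, (∑ l, R j l * T l k) * a j := by
                  refine Finset.sum_congr rfl fun j _ => ?_
                  rw [Finset.sum_mul]
                  refine Finset.sum_congr rfl fun l _ => ?_
                  ring
              _ = ∑ j, (R * T) j k * a j := by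
                  refine Finset.sum_congr rfl fun j _ => ?_
                  rw [Matrix.mul_apply]
          · -- vectors agree
            rw [smul_collapse (fun l => (Ti)ᵀ l k) (fun j l => U⁻¹ j (Fin.succ l)) v]
            rw [hw]
            refine Finset.sum_congr rfl fun j _ => ?_
            congr 1
            all_goals
              refine Finset.sum_congr rfl fun l _ => ?_
              rw [Matrix.transpose_apply]
      -- volume bound
      have hcs : ∀ k, ((M k : ℤ))^2 ≤ (n+1) * q N (fun j => (R * T) j k) := by
        intro k
        have h1 : (M k : ℤ) = ∑ j, (1:ℤ) * ((N j : ℤ) * |(R * T) j k|) := by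
          rw [hM]
          push_cast [Int.natCast_natAbs]
          refine Finset.sum_congr rfl fun j _ => ?_
          ring
        rw [h1]
        have h2 := Finset.sum_mul_sq_le_sq_mul_sq Finset.univ (fun _ => (1:ℤ))
          (fun j => (N j : ℤ) * |(R * T) j k|)
        calc (∑ j, (1:ℤ) * ((N j : ℤ) * |(R * T) j k|))^2
            ≤ (∑ _j : Fin (n+1), (1:ℤ)^2) * ∑ j, ((N j : ℤ) * |(R * T) j k|)^2 := h2
          _ = (n+1) * q N (fun j => (R * T) j k) := by
              congr 1
              · simp
              · unfold q inn
                refine Finset.sum_congr rfl fun j _ => ?_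
                rw [mul_pow, sq_abs]
                ring
      set PM : ℕ := ∏ k, (2 * M k + 1) with hPM
      set PN : ℕ := ∏ j, (2 * N j + 1) with hPN
      have hMvol : PM ≤ Fn n * PN := by
        have hZ : ((PM : ℤ))^2 ≤ ((Fn n * PN : ℕ) : ℤ)^2 := by
          have c1 : ((PM : ℤ))^2 = ∏ k, (2 * (M k : ℤ) + 1)^2 := by
            rw [hPM]
            push_cast
            rw [← Finset.prod_pow]
          have c2 : ∀ k, (2 * (M k : ℤ) + 1)^2 ≤ 9 * ((n+1) * q N (fun j => (R * T) j k)) := by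
            intro k
            have h1 : (1:ℤ) ≤ (M k : ℤ) := by exact_mod_cast hMpos k
            have h2 : (2 * (M k : ℤ) + 1)^2 ≤ 9 * ((M k : ℤ))^2 := by nlinarith
            have h3 := hcs k
            nlinarith
          have c3 : ∏ k, (2 * (M k : ℤ) + 1)^2
              ≤ ∏ k, (9 * ((n+1) * q N (fun j => (R * T) j k))) := by
            apply Finset.prod_le_prod
            · intro k _
              positivity
            · intro k _
              exact c2 k
          have c4 : ∏ k, ((9:ℤ) * ((n+1) * q N (fun j => (R * T) j k)))
              = (9 * (n+1))^n * ∏ k, q N (fun j => (R * T) j k) := by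
            rw [show (fun k => (9:ℤ) * ((n+1) * q N (fun j => (R * T) j k)))
                = fun k => (9 * (n+1)) * q N (fun j => (R * T) j k) by
              funext k; ring]
            rw [Finset.prod_mul_distrib, Finset.prod_const, Finset.card_univ,
              Fintype.card_fin]
          have c5 : ∏ k, q N (fun j => (R * T) j k) ≤ 4^(n*n) * S := by
            rw [← hdetR]
            exact hqbound
          have c6 : (0:ℤ) ≤ ∏ k, q N (fun j => (R * T) j k) :=
            Finset.prod_nonneg fun k _ => q_nonneg N _
          have c7 : ((9:ℤ) * (n+1))^n * ∏ k, q N (fun j => (R * T) j k)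
              ≤ (9 * (n+1))^n * (4^(n*n) * (4 * (n+1) * ∏ j, ((N j : ℤ))^2)) := by
            apply mul_le_mul_of_nonneg_left _ (by positivity)
            calc ∏ k, q N (fun j => (R * T) j k) ≤ 4^(n*n) * S := c5
              _ ≤ 4^(n*n) * (4 * (n+1) * ∏ j, ((N j : ℤ))^2) := by
                  apply mul_le_mul_of_nonneg_left hS4 (by positivity)
          have c8 : ∏ j, ((N j : ℤ))^2 ≤ ∏ j, (2 * (N j : ℤ) + 1)^2 := by
            apply Finset.prod_le_prod
            · intro j _; positivity
            · intro j _
              have := hN j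
              nlinarith [Int.natCast_pos.mpr (hN j)]
          have p1 : ((3:ℤ)^n)^2 = 9^n := by
            rw [← pow_mul, mul_comm n 2, pow_mul]
            norm_num
          have p2 : ((2:ℤ)^(n*n+1))^2 = 4^(n*n+1) := by
            rw [← pow_mul, mul_comm (n*n+1) 2, pow_mul]
            norm_num
          have p3 : (((n:ℤ)+1)^(n+1))^2 = ((n:ℤ)+1)^(2*n+2) := by
            rw [← pow_mul]
            congr 1
            ring
          have cFn : ((Fn n : ℕ) : ℤ)^2 = 9^n * 4^(n*n+1) * ((n:ℤ)+1)^(2*n+2) := by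
            have e1 : ((Fn n : ℕ) : ℤ) = 3^n * 2^(n*n+1) * ((n:ℤ)+1)^(n+1) := by
              unfold Fn
              push_cast
              ring
            rw [e1, mul_pow, mul_pow, p1, p2, p3]
          have cA : ((9:ℤ)*((n:ℤ)+1))^n * 4^(n*n) * (4*((n:ℤ)+1)) ≤ ((Fn n : ℕ) : ℤ)^2 := by
            rw [cFn, mul_pow]
            have e2 : (9:ℤ)^n * ((n:ℤ)+1)^n * 4^(n*n) * (4*((n:ℤ)+1))
                = 9^n * 4^(n*n+1) * ((n:ℤ)+1)^(n+1) := by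
              rw [pow_succ 4 (n*n), pow_succ ((n:ℤ)+1) n]
              ring
            rw [e2]
            apply mul_le_mul_of_nonneg_left _ (by positivity)
            apply pow_le_pow_right₀ (by push_cast; omega)
            omega
          have cast9 : ((Fn n * PN : ℕ) : ℤ)^2
              = ((Fn n : ℕ) : ℤ)^2 * ∏ j, (2*((N j : ℕ):ℤ)+1)^2 := by
            rw [hPN]
            push_cast
            rw [mul_pow, ← Finset.prod_pow]
          calc ((PM : ℤ))^2 = ∏ k, (2 * (M k : ℤ) + 1)^2 := c1
            _ ≤ ∏ k, ((9:ℤ) * ((n+1) * q N (fun j => (R * T) j k))) := c3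
            _ = (9 * ((n:ℤ)+1))^n * ∏ k, q N (fun j => (R * T) j k) := by
                rw [c4]
            _ ≤ (9 * ((n:ℤ)+1))^n * (4^(n*n) * (4 * ((n:ℤ)+1) * ∏ j, ((N j : ℤ))^2)) := by
                apply mul_le_mul_of_nonneg_left _ (by positivity)
                calc ∏ k, q N (fun j => (R * T) j k) ≤ 4^(n*n) * S := c5
                  _ ≤ 4^(n*n) * (4 * ((n:ℤ)+1) * ∏ j, ((N j : ℤ))^2) := by
                      apply mul_le_mul_of_nonneg_left _ (by positivity)
                      exact hS4
            _ = ((9:ℤ)*((n:ℤ)+1))^n * 4^(n*n) * (4*((n:ℤ)+1)) * ∏ j, ((N j : ℤ))^2 := by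
                ring
            _ ≤ ((9:ℤ)*((n:ℤ)+1))^n * 4^(n*n) * (4*((n:ℤ)+1)) * ∏ j, (2*((N j : ℤ))+1)^2 := by
                apply mul_le_mul_of_nonneg_left c8 (by positivity)
            _ ≤ ((Fn n : ℕ) : ℤ)^2 * ∏ j, (2*((N j : ℤ))+1)^2 := by
                apply mul_le_mul_of_nonneg_right cA
                apply Finset.prod_nonneg
                intro j _
                positivity
            _ = ((Fn n * PN : ℕ) : ℤ)^2 := by
                rw [cast9]
        have hZ' : PM^2 ≤ (Fn n * PN)^2 := by exact_mod_cast hZ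
        exact (Nat.pow_le_pow_iff_left (by norm_num)).mp hZ'
      -- recurse
      have hPM1 : n = 0 → PM = 1 := by
        intro h0
        rw [hPM]
        subst h0
        simp
      have hTrans := transfer PM PN hPNpos hMvol hPM1
      have hord' : ∀ g : G, g ≠ 0 → addOrderOf g = 0 ∨
          n ^ (100 * n ^ 3) * ∏ k, (2 * M k + 1) ≤ addOrderOf g := by
        intro g hg
        rcases hord g hg with h | h
        · left; exact h
        · right
          calc n ^ (100 * n ^ 3) * ∏ k, (2 * M k + 1)
              = n ^ (100 * n ^ 3) * PM := by rw [hPM]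
            _ ≤ (n+1) ^ (100 * (n+1) ^ 3) * PN := hTrans
            _ ≤ addOrderOf g := by rw [hPN]; exact h
      obtain ⟨d', w', M', hd'le, hM'pos, hproper', hsub', hvol'⟩ := IH w M hMpos hord'
      refine ⟨d', w', M', le_trans hd'le (Nat.le_succ n), hM'pos, hproper', ?_, ?_⟩
      · exact subset_trans hsubset hsub'
      · calc ∏ j, (2 * M' j + 1) ≤ n ^ (100 * n ^ 3) * ∏ k, (2 * M k + 1) := hvol'
          _ = n ^ (100 * n ^ 3) * PM := by rw [hPM]
          _ ≤ (n+1) ^ (100 * (n+1) ^ 3) * PN := hTrans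
          _ = (n+1) ^ (100 * (n+1) ^ 3) * ∏ j, (2 * N j + 1) := by rw [hPN]
end PIP

/-- Progressions lie inside proper progressions: there is an absolute constant `C₀` such
that any symmetric generalized arithmetic progression `P` of rank `d` in an abelian group
`G` in which every non-zero element has order at least `d^{C₀d³}|P|` (infinite order
allowed) is contained in a proper symmetric progression `Q` of rank at most `d` with
`|Q| ≤ d^{C₀d³}|P|`, where `|·|` denotes the volume `∏ⱼ(2Nⱼ+1)`. -/
theorem progression_in_proper_progression :
    ∃ C₀ : ℕ, 0 < C₀ ∧
      ∀ (G : Type) [AddCommGroup G] (d : ℕ), 1 ≤ d →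
      ∀ (v : Fin d → G) (N : Fin d → ℕ), (∀ j, 0 < N j) →
      (∀ g : G, g ≠ 0 → addOrderOf g = 0 ∨
          d ^ (C₀ * d ^ 3) * ∏ j, (2 * N j + 1) ≤ addOrderOf g) →
      ∃ (d' : ℕ) (w : Fin d' → G) (M : Fin d' → ℕ),
        d' ≤ d ∧ (∀ j, 0 < M j) ∧
        (∀ m m' : Fin d' → ℤ, (∀ j, |m j| ≤ M j) → (∀ j, |m' j| ≤ M j) →
          ∑ j, m j • w j = ∑ j, m' j • w j → m = m') ∧
        {x : G | ∃ m : Fin d → ℤ, (∀ j, |m j| ≤ N j) ∧ x = ∑ j, m j • v j} ⊆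
          {x : G | ∃ m : Fin d' → ℤ, (∀ j, |m j| ≤ M j) ∧ x = ∑ j, m j • w j} ∧
        ∏ j, (2 * M j + 1) ≤ d ^ (C₀ * d ^ 3) * ∏ j, (2 * N j + 1) := by
  refine ⟨100, by norm_num, ?_⟩
  intro G _ d _ v N hN hord
  exact PIP.aux G d v N hN hord
end
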